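/- arXiv:2009.02006 — 6 statements merged into one kernel-verified Lean document; each statement's English description precedes it below -/
import Mathlib

section
/- Let N ≥ 1 and let x be a root of H_N. Then x/2 = Σ_{y ∈ roots(H_N), y ≠ x} 1/(x − y), where the sum runs over the remaining N − 1 roots of H_N. -/
noncomputable def hermiteR (k : ℕ) : Polynomial ℝ :=
  (Polynomial.hermite k).map (Int.castRingHom ℝ)

open Polynomial Filter Set Topology

lemma dherm (n : ℕ) :
    derivative (hermite (n + 1)) = C ((n : ℤ) + 1) * hermite n := by
  induction n with
  | zero => simp [hermite_one, hermite_zero]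
  | succ n ih =>
    rw [hermite_succ (n + 1), derivative_sub, derivative_mul, derivative_X, ih,
      derivative_mul, derivative_C]
    have hc : (((n + 1 : ℕ) : ℤ) + 1) = ((n : ℤ) + 1) + 1 := by push_cast; ring
    calc 1 * hermite (n+1) + X * (C ((n:ℤ)+1) * hermite n)
          - (0 * hermite n + C ((n:ℤ)+1) * derivative (hermite n))
        = hermite (n+1) + C ((n:ℤ)+1) * (X * hermite n - derivative (hermite n)) := by ring
      _ = hermite (n+1) + C ((n:ℤ)+1) * hermite (n+1) := by rw [← hermite_succ]
      _ = (C ((n:ℤ)+1) + C 1) * hermite (n+1) := by rw [C_1]; ring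
      _ = C (((n + 1 : ℕ) : ℤ) + 1) * hermite (n+1) := by rw [hc]; simp only [C_add, C_1]

lemma hermiteR_succ (n : ℕ) :
    hermiteR (n + 1) = X * hermiteR n - derivative (hermiteR n) := by
  unfold hermiteR
  rw [hermite_succ, Polynomial.map_sub, Polynomial.map_mul, map_X, derivative_map]

lemma dhermR (n : ℕ) :
    derivative (hermiteR (n + 1)) = C ((n : ℝ) + 1) * hermiteR n := by
  unfold hermiteR
  rw [derivative_map, dherm, Polynomial.map_mul, map_C]
  norm_num

lemma hermiteR_monic (n : ℕ) : (hermiteR n).Monic :=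
  (hermite_monic n).map _

lemma hermiteR_natDegree (n : ℕ) : (hermiteR n).natDegree = n := by
  have := natDegree_map_eq_of_injective (RingHom.injective_int (Int.castRingHom ℝ)) (hermite n)
  rw [hermiteR, this, natDegree_hermite]

lemma pairroot (n : ℕ) (x : ℝ) (h1 : (hermiteR (n + 1)).IsRoot x)
    (h2 : (hermiteR n).IsRoot x) : False := by
  induction n with
  | zero => simp [hermiteR, hermite_zero, IsRoot] at h2
  | succ n ih =>
    apply ih h2
    have := hermiteR_succ (n + 1)
    have hd := dhermR n
    rw [IsRoot, this, eval_sub, eval_mul, eval_X, hd, eval_mul, eval_C] at h1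
    rw [IsRoot.def] at h2 ⊢
    rw [h2, mul_zero, zero_sub, neg_eq_zero, mul_eq_zero] at h1
    rcases h1 with h | h
    · exfalso; have := Nat.cast_nonneg (α := ℝ) n; linarith
    · exact h

lemma gauss_top (p : Polynomial ℝ) :
    Tendsto (fun x => p.eval x * Real.exp (-(x ^ 2 / 2))) atTop (𝓝 0) := by
  have h1 := p.tendsto_div_exp_atTop
  have h2 : Tendsto (fun x : ℝ => Real.exp (x - x ^ 2 / 2)) atTop (𝓝 0) := by
    apply Real.tendsto_exp_atBot.comp
    have h3 : Tendsto (fun x : ℝ => x * (x / 2 - 1)) atTop atTop :=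
      tendsto_id.atTop_mul_atTop₀
        (tendsto_atTop_add_const_right _ (-1) (tendsto_id.atTop_div_const two_pos))
    have h4 := tendsto_neg_atTop_atBot.comp h3
    refine h4.congr (fun x => by simp [Function.comp]; ring)
  have := h1.mul h2
  rw [mul_zero] at this
  refine this.congr (fun x => ?_)
  rw [div_mul_eq_mul_div, mul_div_assoc, ← Real.exp_sub]
  congr 2
  ring

lemma gauss_bot (p : Polynomial ℝ) :
    Tendsto (fun x => p.eval x * Real.exp (-(x ^ 2 / 2))) atBot (𝓝 0) := by
  have h1 := gauss_top (p.comp (-X))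
  have h2 : Tendsto (fun x : ℝ => -x) atBot atTop := tendsto_neg_atBot_atTop
  have := h1.comp h2
  refine this.congr (fun x => ?_)
  simp [eval_comp]

lemma tail_top_aux {f f' : ℝ → ℝ} (hd : ∀ x, HasDerivAt f (f' x) x) {a b : ℝ}
    (hab : a < b) (ha : f a = 0) (hb : 0 < f b)
    (htop : Tendsto f atTop (𝓝 0)) : ∃ c, a < c ∧ f' c = 0 := by
  have hcont : Continuous f := continuous_iff_continuousAt.2 fun x => (hd x).continuousAt
  have hev : ∀ᶠ x in atTop, f x < f b := htop.eventually_lt_const hb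
  obtain ⟨M, hM⟩ := hev.exists_forall_of_atTop
  set B := max M b + 1 with hB
  have hbB : b < B := lt_of_le_of_lt (le_max_right M b) (lt_add_one _)
  have haB : a < B := hab.trans hbB
  have hfB : f B < f b := hM B (by rw [hB]; linarith [le_max_left M b])
  obtain ⟨c, hc, hmax⟩ := isCompact_Icc.exists_isMaxOn (Set.nonempty_Icc.2 haB.le)
    hcont.continuousOn
  have hfcb : f b ≤ f c := hmax ⟨hab.le, hbB.le⟩
  have hca : c ≠ a := by rintro rfl; rw [ha] at hfcb; linarith
  have hcB : c ≠ B := by rintro rfl; linarith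
  have hcIoo : c ∈ Set.Ioo a B := ⟨lt_of_le_of_ne hc.1 (Ne.symm hca), lt_of_le_of_ne hc.2 hcB⟩
  refine ⟨c, hcIoo.1, ?_⟩
  have hloc : IsLocalMax f c :=
    hmax.isLocalMax (Filter.mem_of_superset (Ioo_mem_nhds hcIoo.1 hcIoo.2) Set.Ioo_subset_Icc_self)
  exact hloc.hasDerivAt_eq_zero (hd c)

lemma tail_top {f f' : ℝ → ℝ} (hd : ∀ x, HasDerivAt f (f' x) x) {a b : ℝ}
    (hab : a < b) (ha : f a = 0) (hb : f b ≠ 0)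
    (htop : Tendsto f atTop (𝓝 0)) : ∃ c, a < c ∧ f' c = 0 := by
  rcases hb.lt_or_gt with h | h
  · have hd' : ∀ x, HasDerivAt (fun y => -f y) (-f' x) x := fun x => (hd x).neg
    obtain ⟨c, hc1, hc2⟩ := tail_top_aux hd' hab (by simp [ha]) (by simpa using h.le.lt_of_ne hb)
      (by simpa using htop.neg)
    exact ⟨c, hc1, by linarith [neg_eq_zero.1 hc2]⟩
  · exact tail_top_aux hd hab ha h htop

lemma tail_bot {f f' : ℝ → ℝ} (hd : ∀ x, HasDerivAt f (f' x) x) {a b : ℝ}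
    (hab : b < a) (ha : f a = 0) (hb : f b ≠ 0)
    (hbot : Tendsto f atBot (𝓝 0)) : ∃ c, c < a ∧ f' c = 0 := by
  set g : ℝ → ℝ := fun x => f (-x) with hg
  have hgd : ∀ x, HasDerivAt g (-f' (-x)) x := by
    intro x
    have := (hd (-x)).comp x (hasDerivAt_neg x)
    rw [mul_neg_one] at this
    exact this
  have hgt : Tendsto g atTop (𝓝 0) := hbot.comp tendsto_neg_atTop_atBot
  obtain ⟨c, hc1, hc2⟩ := tail_top hgd (a := -a) (b := -b) (by linarith)
    (by simp [hg, ha]) (by simpa [hg]) hgt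
  exact ⟨-c, by linarith, by linarith [neg_eq_zero.1 hc2]⟩

lemma hermiteR_ne_zero (n : ℕ) : hermiteR n ≠ 0 := (hermiteR_monic n).ne_zero

lemma hermiteR_roots_nodup (n : ℕ) : (hermiteR n).roots.Nodup := by
  cases n with
  | zero =>
    have : hermiteR 0 = 1 := by simp [hermiteR, hermite_zero]
    simp [this]
  | succ n =>
    rw [Multiset.nodup_iff_count_le_one]
    intro x
    rw [Polynomial.count_roots]
    by_contra h
    push_neg at h
    have h2 : (derivative^[1] (hermiteR (n+1))).IsRoot x :=
      isRoot_iterate_derivative_of_lt_rootMultiplicity h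
    have hroot : (hermiteR (n+1)).IsRoot x := by
      have := isRoot_iterate_derivative_of_lt_rootMultiplicity (n := 0)
        (lt_trans one_pos h)
      simpa using this
    rw [Function.iterate_one, dhermR] at h2
    rw [IsRoot.def, eval_mul, eval_C, mul_eq_zero] at h2
    rcases h2 with h2 | h2
    · have := Nat.cast_nonneg (α := ℝ) n; linarith
    · exact pairroot n x hroot h2

lemma hermiteR_card_roots (n : ℕ) : Multiset.card (hermiteR n).roots = n := by
  induction n with
  | zero =>
    have : hermiteR 0 = 1 := by simp [hermiteR, hermite_zero]
    simp [this]
  | succ n ih =>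
    rcases Nat.eq_zero_or_pos n with rfl | hn
    · have : hermiteR 1 = X := by simp [hermiteR, hermite_one]
      simp [this, roots_X]
    -- setup
    set p := hermiteR n with hp
    set P := hermiteR (n + 1) with hP
    set f : ℝ → ℝ := fun x => p.eval x * Real.exp (-(x ^ 2 / 2)) with hf
    have hd : ∀ x : ℝ, HasDerivAt f (-(P.eval x) * Real.exp (-(x ^ 2 / 2))) x := by
      intro x
      have h1 : HasDerivAt (fun y : ℝ => p.eval y) (p.derivative.eval x) x :=
        p.hasDerivAt x
      have h2 : HasDerivAt (fun y : ℝ => Real.exp (-(y ^ 2 / 2)))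
          (-x * Real.exp (-(x ^ 2 / 2))) x := by
        have h3 : HasDerivAt (fun y : ℝ => -(y ^ 2 / 2)) (-x) x := by
          have := ((hasDerivAt_pow 2 x).div_const 2).neg
          exact this.congr_deriv (by ring)
        simpa [mul_comm] using h3.exp
      have := h1.mul h2
      refine this.congr_deriv ?_
      have hPev : P.eval x = x * p.eval x - p.derivative.eval x := by
        rw [hP, hp, hermiteR_succ]
        simp
      rw [hPev]
      ring
    have hzero : ∀ c : ℝ, -(P.eval c) * Real.exp (-(c ^ 2 / 2)) = 0 → P.IsRoot c := by
      intro c hc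
      rcases mul_eq_zero.1 hc with hc | hc
      · exact neg_eq_zero.1 hc
      · exact absurd hc (Real.exp_ne_zero _)
    have htop : Tendsto f atTop (𝓝 0) := gauss_top p
    have hbot : Tendsto f atBot (𝓝 0) := gauss_bot p
    have hfin : {x : ℝ | p.IsRoot x}.Finite := Polynomial.finite_setOf_isRoot (hermiteR_ne_zero n)
    have hnzTop : ∀ a : ℝ, ∃ b, a < b ∧ f b ≠ 0 := by
      intro a
      obtain ⟨b, hb⟩ := ((Set.Ioi_infinite a).diff hfin).nonempty
      refine ⟨b, hb.1, ?_⟩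
      simp only [hf]
      exact mul_ne_zero (fun h => hb.2 h) (Real.exp_ne_zero _)
    have hnzBot : ∀ a : ℝ, ∃ b, b < a ∧ f b ≠ 0 := by
      intro a
      obtain ⟨b, hb⟩ := ((Set.Iio_infinite a).diff hfin).nonempty
      refine ⟨b, hb.1, ?_⟩
      exact mul_ne_zero (fun h => hb.2 h) (Real.exp_ne_zero _)
    set s := p.roots.toFinset with hs
    have hscard : s.card = n := by
      rw [hs, Multiset.toFinset_card_of_nodup (hermiteR_roots_nodup n), ih]
    have hsne : s.Nonempty := Finset.card_pos.1 (by rw [hscard]; exact hn)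
    have hsroot : ∀ a ∈ s, f a = 0 := by
      intro a ha
      have : p.eval a = 0 := by
        rw [hs, Multiset.mem_toFinset, mem_roots (hermiteR_ne_zero n)] at ha
        exact ha
      simp [hf, this]
    -- critical point after each zero
    have key : ∀ a : ℝ, ∃ c, a ∈ s →
        a < c ∧ (∀ a' ∈ s, a < a' → c < a') ∧ P.IsRoot c := by
      intro a
      by_cases has : a ∈ s
      swap
      · exact ⟨0, fun h => absurd h has⟩
      set U := s.filter (fun y => a < y) with hU
      by_cases hUne : U.Nonempty
      · set b := U.min' hUne with hb
        have hbU : b ∈ U := U.min'_mem hUne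
        have hab : a < b := (Finset.mem_filter.1 hbU).2
        obtain ⟨c, hc, hc0⟩ := exists_hasDerivAt_eq_zero hab
          ((continuous_iff_continuousAt.2 fun x => (hd x).continuousAt).continuousOn)
          ((hsroot a has).trans (hsroot b (Finset.mem_filter.1 hbU).1).symm)
          (fun x _ => hd x)
        refine ⟨c, fun _ => ⟨hc.1, ?_, hzero c hc0⟩⟩
        intro a' ha' haa'
        have : a' ∈ U := Finset.mem_filter.2 ⟨ha', haa'⟩
        exact lt_of_lt_of_le hc.2 (U.min'_le a' this)
      · obtain ⟨b, hab, hfb⟩ := hnzTop a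
        obtain ⟨c, hc1, hc2⟩ := tail_top hd hab (hsroot a has) hfb htop
        refine ⟨c, fun _ => ⟨hc1, ?_, hzero c hc2⟩⟩
        intro a' ha' haa'
        exact absurd ⟨a', Finset.mem_filter.2 ⟨ha', haa'⟩⟩ hUne
    choose g hg using key
    -- bottom tail
    set m := s.min' hsne with hm
    obtain ⟨b0, hb0, hfb0⟩ := hnzBot m
    obtain ⟨c0, hc0m, hc0⟩ := tail_bot hd hb0 (hsroot m (s.min'_mem hsne)) hfb0 hbot
    have hc0root : P.IsRoot c0 := hzero c0 hc0
    -- the finset of n+1 roots of P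
    have hginj : Set.InjOn g s := by
      have hmono : ∀ a ∈ s, ∀ a' ∈ s, a < a' → g a < g a' := by
        intro a ha a' ha' hlt
        exact lt_trans ((hg a ha).2.1 a' ha' hlt) (hg a' ha').1
      intro a ha a' ha' hgaa
      by_contra hne
      rcases lt_or_gt_of_ne hne with h | h
      · exact absurd hgaa (ne_of_lt (hmono a ha a' ha' h))
      · exact absurd hgaa.symm (ne_of_lt (hmono a' ha' a ha h))
    set t := insert c0 (s.image g) with ht
    have hc0not : c0 ∉ s.image g := by
      intro hmem
      obtain ⟨a, ha, hga⟩ := Finset.mem_image.1 hmem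
      have h1 : m ≤ a := s.min'_le a ha
      have h2 : a < g a := (hg a ha).1
      linarith [hga ▸ h2]
    have htcard : t.card = n + 1 := by
      rw [ht, Finset.card_insert_of_notMem hc0not, Finset.card_image_of_injOn hginj, hscard]
    have htroot : ∀ c ∈ t, P.IsRoot c := by
      intro c hc
      rcases Finset.mem_insert.1 hc with rfl | hc
      · exact hc0root
      · obtain ⟨a, ha, rfl⟩ := Finset.mem_image.1 hc
        exact (hg a ha).2.2
    -- conclude
    have hle : t.val ≤ P.roots := by
      rw [Multiset.le_iff_subset t.nodup]
      intro c hc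
      rw [mem_roots (hermiteR_ne_zero (n+1))]
      exact htroot c hc
    have h1 : n + 1 ≤ Multiset.card P.roots := by
      have := Multiset.card_le_card hle
      rwa [show Multiset.card t.val = t.card from rfl, htcard] at this
    have h2 : Multiset.card P.roots ≤ n + 1 := by
      have := P.card_roots'
      rwa [hermiteR_natDegree] at this
    omega

lemma logderiv (s : Multiset ℝ) (x : ℝ) (hs : ∀ y ∈ s, y ≠ x) :
    Polynomial.eval x (derivative (s.map (fun y => X - C y)).prod) =
      ((s.map (fun y => 1 / (x - y))).sum) *
        Polynomial.eval x ((s.map (fun y => X - C y)).prod) := by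
  induction s using Multiset.induction_on with
  | empty => simp
  | cons a s ih =>
    have ha : a ≠ x := hs a (Multiset.mem_cons_self a s)
    have hxa : x - a ≠ 0 := fun h => ha (by linarith [sub_eq_zero.1 h])
    have ih' := ih (fun y hy => hs y (Multiset.mem_cons_of_mem hy))
    simp only [Multiset.map_cons, Multiset.prod_cons, Multiset.sum_cons]
    rw [derivative_mul, eval_add, eval_mul, eval_mul, ih']
    simp only [derivative_sub, derivative_X, derivative_C, sub_zero, eval_one, eval_sub,
      eval_X, eval_C]
    field_simp
    simp only [eval_mul, eval_sub, eval_X, eval_C]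
    ring

theorem stmt2 (N : ℕ) (hN : 1 ≤ N) (x : ℝ) (hx : (hermiteR N).IsRoot x) :
    x / 2 = (((hermiteR N).roots.filter (fun y => y ≠ x)).map (fun y => 1 / (x - y))).sum := by
  obtain ⟨n, rfl⟩ : ∃ n, N = n + 1 := ⟨N - 1, (Nat.succ_pred_eq_of_pos hN).symm⟩
  set P := hermiteR (n + 1) with hP
  have hP0 : P ≠ 0 := hermiteR_ne_zero (n + 1)
  have hnodup : P.roots.Nodup := hermiteR_roots_nodup (n + 1)
  have hxm : x ∈ P.roots := (mem_roots hP0).2 hx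
  set s := P.roots.erase x with hs
  have hcons : P.roots = x ::ₘ s := (Multiset.cons_erase hxm).symm
  have hxns : x ∉ s := hnodup.notMem_erase
  have hsne : ∀ y ∈ s, y ≠ x := fun y hy h => hxns (h ▸ hy)
  -- filter = s
  have hfilter : P.roots.filter (fun y => y ≠ x) = s := by
    rw [hcons, Multiset.filter_cons_of_neg _ (by simp), Multiset.filter_eq_self.2 hsne]
  -- factorization
  have hcard : Multiset.card P.roots = P.natDegree := by
    rw [hermiteR_card_roots, hermiteR_natDegree]
  have hprod : (P.roots.map (fun y => X - C y)).prod = P :=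
    prod_multiset_X_sub_C_of_monic_of_roots_card_eq (hermiteR_monic (n + 1)) hcard
  set Q := (s.map (fun y => X - C y)).prod with hQ
  have hfact : P = (X - C x) * Q := by
    rw [← hprod, hcons, Multiset.map_cons, Multiset.prod_cons]
  have hQx : Q.eval x ≠ 0 := by
    rw [hQ, eval_multiset_prod]
    apply Multiset.prod_ne_zero
    simp only [Multiset.map_map, Multiset.mem_map, Function.comp]
    rintro ⟨y, hy, h0⟩
    rw [eval_sub, eval_X, eval_C] at h0
    exact hsne y hy (by linarith [sub_eq_zero.1 h0])
  -- derivatives at x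
  have hd1 : P.derivative.eval x = Q.eval x := by
    rw [hfact, derivative_mul]
    simp
  have hd2 : (derivative (derivative P)).eval x = 2 * (derivative Q).eval x := by
    rw [hfact]
    simp only [derivative_mul, derivative_add, derivative_sub, derivative_X, derivative_C,
      sub_zero]
    simp [eval_add, eval_mul]
    ring
  -- ODE at root x
  have hode : (derivative (derivative P)).eval x = x * P.derivative.eval x := by
    rw [hP, dhermR]
    rw [derivative_mul, derivative_C]
    have hdn : derivative (hermiteR n) = X * hermiteR n - hermiteR (n + 1) := by
      rw [hermiteR_succ]; ring
    rw [hdn]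
    simp only [eval_add, eval_mul, eval_C, eval_sub, eval_X, zero_mul, eval_zero, zero_add]
    rw [show (hermiteR (n+1)).eval x = 0 from hx]
    ring
  -- combine
  have hld := logderiv s x hsne
  rw [← hQ] at hld
  rw [hfilter]
  have h2Q : 2 * (derivative Q).eval x = x * Q.eval x := by rw [← hd2, hode, hd1]
  rw [hld] at h2Q
  have hc : (2 * (Multiset.map (fun y => 1 / (x - y)) s).sum) * Q.eval x = x * Q.eval x := by
    linarith [h2Q]
  have := mul_right_cancel₀ hQx hc
  linarith [this]
end

section
/- Let P be a real polynomial of degree n ≥ 1 all of whose roots are real and simple (its root multiset has n pairwise distinct real elements). If y ∈ ℝ satisfies P'(y) = 0, then P(y) ≠ 0 and Σ_{x ∈ roots(P)} 1/(x − y)² = − P''(y)/P(y). -/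
open Polynomial

private lemma sq_sum_multiset (g : ℝ → ℝ) (s : Multiset ℝ) :
    ((s.map g).sum) ^ 2 = (s.map (fun x => g x ^ 2)).sum +
      (s.map (fun x => g x * ((s.erase x).map g).sum)).sum := by
  induction s using Multiset.induction with
  | empty => simp
  | cons a s ih =>
    have key : (s.map (fun x => g x * (((a ::ₘ s).erase x).map g).sum)).sum
        = (s.map (fun x => g a * g x + g x * ((s.erase x).map g).sum)).sum := by
      refine congrArg _ (Multiset.map_congr rfl fun x hx => ?_)
      rw [Multiset.erase_cons_tail_of_mem hx, Multiset.map_cons, Multiset.sum_cons]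
      ring
    rw [Multiset.map_cons, Multiset.sum_cons, Multiset.map_cons, Multiset.sum_cons,
      Multiset.map_cons, Multiset.sum_cons, Multiset.erase_cons_head, key,
      Multiset.sum_map_add, Multiset.sum_map_mul_left]
    nlinarith [ih]

private lemma eval_msum (y : ℝ) (t : Multiset (Polynomial ℝ)) :
    (t.sum).eval y = (t.map (Polynomial.eval y)).sum := by
  simpa using map_multiset_sum (Polynomial.evalRingHom y) t

theorem stmt3 (P : Polynomial ℝ) (n : ℕ) (hn : 1 ≤ n) (hdeg : P.natDegree = n)
    (hcard : P.roots.card = n) (hnodup : P.roots.Nodup)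
    (y : ℝ) (hy : (Polynomial.derivative P).eval y = 0) :
    P.eval y ≠ 0 ∧
      (P.roots.map (fun x => 1 / (x - y) ^ 2)).sum =
        -((Polynomial.derivative (Polynomial.derivative P)).eval y) / P.eval y := by
  classical
  set s := P.roots with hs
  have hP0 : P ≠ 0 := fun h => by simp [h] at hdeg; omega
  have hc : P.leadingCoeff ≠ 0 := leadingCoeff_ne_zero.mpr hP0
  set c := P.leadingCoeff with hcdef
  set M : ℝ[X] := (s.map (fun a => X - C a)).prod with hM
  have hfact : P = C c * M :=
    (C_leadingCoeff_mul_prod_multiset_X_sub_C (by rw [hdeg, hcard])).symm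
  -- derivative of M
  have hdM : (derivative M).eval y = 0 := by
    have : (derivative P).eval y = c * (derivative M).eval y := by
      rw [hfact, derivative_C_mul, eval_mul, eval_C]
    rw [this] at hy
    exact (mul_eq_zero.mp hy).resolve_left hc
  -- y is not a root
  have hynr : ∀ x ∈ s, y - x ≠ 0 := by
    intro x hx hxy
    have hyx : y = x := by linarith [sub_eq_zero.mp hxy]
    subst hyx
    have := eval_multiset_prod_X_sub_C_derivative (S := s) (r := y) hx
    rw [← hM, hdM] at this
    have hne : ∀ z ∈ (s.erase y).map (fun a => y - a), z ≠ 0 := by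
      intro z hz
      obtain ⟨a, ha, rfl⟩ := Multiset.mem_map.mp hz
      have : a ≠ y := fun h => (Multiset.Nodup.notMem_erase hnodup) (h ▸ ha)
      exact sub_ne_zero.mpr (Ne.symm this)
    exact Multiset.prod_ne_zero (fun h0 => (hne 0 h0) rfl) this.symm
  set p : ℝ := (s.map (fun a => y - a)).prod with hp
  have hpne : p ≠ 0 := by
    refine Multiset.prod_ne_zero fun h0 => ?_
    obtain ⟨a, ha, h⟩ := Multiset.mem_map.mp h0
    exact hynr a ha h
  have hevM : M.eval y = p := by
    rw [hM, eval_multiset_prod, Multiset.map_map, hp]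
    exact congrArg _ (Multiset.map_congr rfl fun x _ => by simp)
  have hPy : P.eval y = c * p := by rw [hfact, eval_mul, eval_C, hevM]
  have hPyne : P.eval y ≠ 0 := by rw [hPy]; exact mul_ne_zero hc hpne
  refine ⟨hPyne, ?_⟩
  set g : ℝ → ℝ := fun x => (y - x)⁻¹ with hg
  -- first derivative as a sum
  have hdM1 : derivative M = (s.map (fun x => ((s.erase x).map (fun a => X - C a)).prod)).sum := by
    rw [hM, derivative_prod]
    refine congrArg _ (Multiset.map_congr rfl fun x hx => ?_)
    simp
  -- sum of g over s is 0
  have hq : ∀ x ∈ s, (((s.erase x).map (fun a => y - a)).prod) = p * g x := by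
    intro x hx
    have := Multiset.prod_map_erase (f := fun a => y - a) hx
    have hx0 := hynr x hx
    rw [hg]
    field_simp
    linear_combination this
  have hsum0 : (s.map g).sum = 0 := by
    have h1 : (derivative M).eval y = (s.map (fun x => p * g x)).sum := by
      rw [hdM1]
      rw [eval_msum, Multiset.map_map]
      refine congrArg _ (Multiset.map_congr rfl fun x hx => ?_)
      simp only [Function.comp_apply, eval_multiset_prod, Multiset.map_map]
      rw [← hq x hx]
      exact congrArg _ (Multiset.map_congr rfl fun z _ => by simp)
    rw [hdM, Multiset.sum_map_mul_left] at h1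
    exact (mul_eq_zero.mp h1.symm).resolve_left hpne
  -- second derivative evaluated
  have hd2 : (derivative (derivative M)).eval y
      = (s.map (fun x => p * (g x * ((s.erase x).map g).sum))).sum := by
    rw [hdM1, map_multiset_sum (derivative (R := ℝ)), Multiset.map_map, eval_msum,
      Multiset.map_map]
    refine congrArg _ (Multiset.map_congr rfl fun x hx => ?_)
    simp only [Function.comp_apply]
    rw [derivative_prod, eval_msum, Multiset.map_map]
    have step : ∀ t ∈ s.erase x,
        (eval y ∘ fun i => (((s.erase x).erase i).map fun a => X - C a).prod * derivative (X - C i)) t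
          = (p * g x) * g t := by
      intro t ht
      simp only [Function.comp_apply, derivative_sub, derivative_X, derivative_C, sub_zero,
        eval_mul, eval_one, mul_one, eval_multiset_prod, Multiset.map_map]
      have h2 := Multiset.prod_map_erase (f := fun a => y - a) ht
      have h3 := hq x hx
      have htne : y - t ≠ 0 := hynr t (Multiset.mem_of_mem_erase ht)
      have : (y - t) * ((((s.erase x).erase t).map fun a => y - a)).prod = p * g x := by
        rw [← h3]; exact h2
      have hgt : g t = (y - t)⁻¹ := rfl
      rw [hgt, ← this, mul_comm (y - t) _, mul_inv_cancel_right₀ htne]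
      exact congrArg _ (Multiset.map_congr rfl fun z _ => by simp)
    rw [Multiset.map_congr rfl step, Multiset.sum_map_mul_left]
    ring
  have hsq := sq_sum_multiset g s
  rw [hsum0] at hsq
  have hEsum : (s.map (fun x => g x * ((s.erase x).map g).sum)).sum
      = -(s.map (fun x => g x ^ 2)).sum := by linarith [hsq]
  have hE : (derivative (derivative M)).eval y = -p * (s.map (fun x => g x ^ 2)).sum := by
    rw [hd2, Multiset.sum_map_mul_left, hEsum]; ring
  have hd2P : (derivative (derivative P)).eval y = c * ((derivative (derivative M)).eval y) := by
    rw [hfact, derivative_C_mul, derivative_C_mul, eval_mul, eval_C]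
  have hlhs : (s.map (fun x => 1 / (x - y) ^ 2)).sum = (s.map (fun x => g x ^ 2)).sum := by
    refine congrArg _ (Multiset.map_congr rfl fun x hx => ?_)
    have : (x - y) ^ 2 = (y - x) ^ 2 := by ring
    rw [this, hg, one_div]
    simp [pow_two, mul_inv]
  rw [hlhs, hd2P, hE, hPy]
  field_simp
end

section
/- Let k ≥ 1 and let P be a monic real polynomial of degree k + 1 with k + 1 pairwise distinct real roots; then its derivative P' has k pairwise distinct real roots, none of which is a root of P. For every 0 ≤ m ≤ k − 1 there exists a real polynomial g of degree at most m − 1 such that for every root x of P: Σ_{y ∈ roots(P')} [ y^m · (x − y)^{−2} · ( Σ_{x' ∈ roots(P)} (x' − y)^{−2} )^{−1} ] = ((k − m)/(k + 1))·x^m + g(x). -/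
open Polynomial

lemma sqsum (s : Multiset ℝ) :
    ((s.map (fun a => (((s.erase a).map (fun b => X - C b)).prod)^2)).sum : ℝ[X])
      = (derivative ((s.map (fun b => X - C b)).prod))^2
        - ((s.map (fun b => X - C b)).prod)
          * derivative (derivative ((s.map (fun b => X - C b)).prod)) := by
  induction s using Multiset.induction with
  | empty => simp
  | cons a u ih =>
    rw [Multiset.map_cons, Multiset.sum_cons, Multiset.erase_cons_head]
    have htail : (u.map (fun b =>
        ((((a ::ₘ u).erase b).map (fun c => X - C c)).prod)^2)).sum
        = ((X - C a)^2) * (u.map (fun b =>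
            (((u.erase b).map (fun c => X - C c)).prod)^2)).sum := by
      rw [← Multiset.sum_map_mul_left]
      refine congrArg Multiset.sum (Multiset.map_congr rfl ?_)
      intro b hb
      rw [Multiset.erase_cons_tail_of_mem hb, Multiset.map_cons, Multiset.prod_cons]
      ring
    rw [htail, Multiset.map_cons, Multiset.prod_cons]
    set Pu := (u.map (fun b => X - C b)).prod
    simp only [derivative_mul, derivative_sub, derivative_X, derivative_C, sub_zero, one_mul,
      derivative_add, derivative_one]
    rw [ih]
    ring

lemma vanish (t : Multiset ℝ) (ht : t.Nodup) (p : ℝ[X])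
    (hdeg : p.degree < (Multiset.card t : ℕ)) (hv : ∀ y ∈ t, p.eval y = 0) : p = 0 := by
  by_contra hp
  have hle : t ≤ p.roots := by
    rw [Multiset.le_iff_count]
    intro a
    by_cases ha : a ∈ t
    · rw [Multiset.count_eq_one_of_mem ht ha, count_roots]
      exact (rootMultiplicity_pos hp).2 (hv a ha)
    · simp [Multiset.count_eq_zero_of_notMem ha]
  have h1 : Multiset.card t ≤ Multiset.card p.roots := Multiset.card_le_card hle
  have h2 := p.card_roots'
  have h3 : p.natDegree < Multiset.card t := (natDegree_lt_iff_degree_lt hp).2 hdeg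
  omega

lemma deg_sum_lt (l : Multiset ℝ[X]) (n : ℕ) (h0 : 0 < n) (h : ∀ p ∈ l, p.degree < (n : ℕ)) :
    l.sum.degree < (n : ℕ) := by
  induction l using Multiset.induction with
  | empty =>
    simpa using lt_of_lt_of_le (WithBot.bot_lt_coe 0) (by exact_mod_cast WithBot.coe_le_coe.2 h0.le)
  | cons a s ih =>
    rw [Multiset.sum_cons]
    exact lt_of_le_of_lt (degree_add_le _ _)
      (max_lt (h a (Multiset.mem_cons_self a s)) (ih fun p hp => h p (Multiset.mem_cons_of_mem hp)))

lemma sum_map_sub' (t : Multiset ℝ) (f g : ℝ → ℝ) :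
    (t.map (fun y => f y - g y)).sum = (t.map f).sum - (t.map g).sum := by
  induction t using Multiset.induction with
  | empty => simp
  | cons a s ih => simp [Multiset.sum_cons, ih]; ring

lemma eval_msum_s5 (s : Multiset ℝ[X]) (x : ℝ) : s.sum.eval x = (s.map (eval x)).sum :=
  map_multiset_sum (evalRingHom x) s

noncomputable def Wp (t : Multiset ℝ) (y : ℝ) : ℝ[X] := ((t.erase y).map (fun b => X - C b)).prod
noncomputable def dd (t : Multiset ℝ) (y : ℝ) : ℝ := ((t.erase y).map (fun b => y - b)).prod

lemma Wp_monic (t : Multiset ℝ) (y : ℝ) : (Wp t y).Monic :=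
  monic_multiset_prod_of_monic _ _ (fun i _ => monic_X_sub_C i)

lemma Wp_natDegree (t : Multiset ℝ) (y : ℝ) (hy : y ∈ t) :
    (Wp t y).natDegree = Multiset.card t - 1 := by
  rw [Wp, natDegree_multiset_prod_X_sub_C_eq_card, Multiset.card_erase_of_mem hy]
  rfl

lemma Wp_eval (t : Multiset ℝ) (y x : ℝ) :
    (Wp t y).eval x = ((t.erase y).map (fun b => x - b)).prod := by
  rw [Wp, eval_multiset_prod, Multiset.map_map]
  simp [Function.comp]

lemma Wp_eval_self (t : Multiset ℝ) (y : ℝ) : (Wp t y).eval y = dd t y := Wp_eval t y y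

lemma Wp_eval_zero (t : Multiset ℝ) (y x : ℝ) (hx : x ∈ t.erase y) : (Wp t y).eval x = 0 := by
  rw [Wp_eval]
  exact Multiset.prod_eq_zero (Multiset.mem_map.2 ⟨x, hx, by ring⟩)

lemma dd_ne_zero (t : Multiset ℝ) (ht : t.Nodup) (y : ℝ) : dd t y ≠ 0 := by
  rw [dd]
  refine Multiset.prod_ne_zero ?_
  intro h0
  obtain ⟨b, hb, hb0⟩ := Multiset.mem_map.1 h0
  have hby : y = b := by linarith [hb0.symm]
  exact ht.notMem_erase (hby ▸ hb)

lemma W_factor (t : Multiset ℝ) (y : ℝ) (hy : y ∈ t) :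
    (t.map (fun b => X - C b)).prod = (X - C y) * Wp t y := by
  conv_lhs => rw [← Multiset.cons_erase hy]
  rw [Multiset.map_cons, Multiset.prod_cons, Wp]

lemma lagrange_eq (t : Multiset ℝ) (ht : t.Nodup) (r : ℝ[X])
    (hdeg : r.degree < (Multiset.card t : ℕ)) :
    r = (t.map (fun y => C (r.eval y / dd t y) * Wp t y)).sum := by
  rcases Nat.eq_zero_or_pos (Multiset.card t) with h0 | h0
  · rw [Multiset.card_eq_zero.1 h0] at hdeg ⊢
    simp only [Multiset.card_zero, Nat.cast_zero] at hdeg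
    rw [Nat.WithBot.lt_zero_iff, degree_eq_bot] at hdeg
    simp [hdeg]
  have hsumdeg : ((t.map (fun y => C (r.eval y / dd t y) * Wp t y)).sum).degree
      < (Multiset.card t : ℕ) := by
    refine deg_sum_lt _ _ h0 ?_
    intro p hp
    obtain ⟨y, hy, rfl⟩ := Multiset.mem_map.1 hp
    refine lt_of_le_of_lt (degree_mul_le _ _) ?_
    refine lt_of_le_of_lt (add_le_add degree_C_le le_rfl) ?_
    rw [zero_add, degree_eq_natDegree (Wp_monic t y).ne_zero, Wp_natDegree t y hy]
    exact_mod_cast Nat.sub_lt h0 one_pos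
  have hvan : r - (t.map (fun y => C (r.eval y / dd t y) * Wp t y)).sum = 0 := by
    refine vanish t ht _ (lt_of_le_of_lt (degree_sub_le _ _) (max_lt hdeg hsumdeg)) ?_
    intro y0 hy0
    rw [eval_sub, sub_eq_zero]
    have hev : ((t.map (fun y => C (r.eval y / dd t y) * Wp t y)).sum).eval y0
        = (t.map (fun y => (r.eval y / dd t y) * (Wp t y).eval y0)).sum := by
      rw [show ((t.map (fun y => C (r.eval y / dd t y) * Wp t y)).sum).eval y0
          = ((t.map (fun y => C (r.eval y / dd t y) * Wp t y)).map (eval y0)).sum from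
        map_multiset_sum (evalRingHom y0) _, Multiset.map_map]
      refine congrArg Multiset.sum (Multiset.map_congr rfl ?_)
      intro y _
      simp [Function.comp]
    rw [hev]
    set f : ℝ → ℝ := fun y => (r.eval y / dd t y) * (Wp t y).eval y0 with hf
    obtain ⟨u, hu1, hu2⟩ : ∃ u, t = y0 ::ₘ u ∧ u = t.erase y0 :=
      ⟨t.erase y0, (Multiset.cons_erase hy0).symm, rfl⟩
    rw [hu1, Multiset.map_cons, Multiset.sum_cons]
    have htail : (u.map f).sum = 0 := by
      refine Multiset.sum_eq_zero ?_
      intro z hz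
      obtain ⟨y, hy, rfl⟩ := Multiset.mem_map.1 hz
      have hyne : y0 ≠ y := by
        rintro rfl
        exact ht.notMem_erase (hu2 ▸ hy)
      have hz0 : (Wp t y).eval y0 = 0 :=
        Wp_eval_zero t y y0 ((Multiset.mem_erase_of_ne hyne).2 hy0)
      simp [hf, hz0]
    rw [htail, add_zero]
    simp only [hf, Wp_eval_self]
    field_simp [dd_ne_zero t ht y0]
  exact sub_eq_zero.1 hvan

lemma keylemma (t : Multiset ℝ) (ht : t.Nodup) (r : ℝ[X])
    (hdeg : r.degree < (Multiset.card t : ℕ)) (x : ℝ) :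
    (t.map (fun y => (r.eval y / dd t y) * ((Wp t y).eval x)^2)).sum
      = r.eval x * (derivative ((t.map (fun b => X - C b)).prod)).eval x
        - (derivative r).eval x * ((t.map (fun b => X - C b)).prod).eval x := by
  set W := (t.map (fun b => X - C b)).prod with hW
  have hr := lagrange_eq t ht r hdeg
  have hrx : r.eval x = (t.map (fun y => (r.eval y / dd t y) * (Wp t y).eval x)).sum := by
    conv_lhs => rw [hr]
    rw [show ((t.map (fun y => C (r.eval y / dd t y) * Wp t y)).sum).eval x
        = ((t.map (fun y => C (r.eval y / dd t y) * Wp t y)).map (eval x)).sum from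
      map_multiset_sum (evalRingHom x) _, Multiset.map_map]
    exact congrArg Multiset.sum (Multiset.map_congr rfl fun y _ => by simp [Function.comp])
  have hr'x : (derivative r).eval x
      = (t.map (fun y => (r.eval y / dd t y) * (derivative (Wp t y)).eval x)).sum := by
    conv_lhs => rw [hr]
    rw [show derivative ((t.map (fun y => C (r.eval y / dd t y) * Wp t y)).sum)
        = ((t.map (fun y => C (r.eval y / dd t y) * Wp t y)).map derivative).sum from
      map_multiset_sum derivative _, Multiset.map_map]
    simp only [Function.comp_def]
    rw [show (((t.map (fun y => derivative (C (r.eval y / dd t y) * Wp t y)))).sum).eval x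
        = ((t.map (fun y => derivative (C (r.eval y / dd t y) * Wp t y))).map (eval x)).sum from
      map_multiset_sum (evalRingHom x) _, Multiset.map_map]
    refine congrArg Multiset.sum (Multiset.map_congr rfl fun y _ => ?_)
    simp [Function.comp, derivative_mul]
  rw [hrx, hr'x, ← Multiset.sum_map_mul_right, ← Multiset.sum_map_mul_right, ← sum_map_sub']
  refine congrArg Multiset.sum (Multiset.map_congr rfl ?_)
  intro y hy
  have hWf : W = (X - C y) * Wp t y := W_factor t y hy
  have hW' : derivative W = Wp t y + (X - C y) * derivative (Wp t y) := by
    rw [hWf, derivative_mul]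
    simp
  rw [hW', hWf]
  simp only [eval_add, eval_mul, eval_sub, eval_X, eval_C]
  ring

theorem stmt5 (k : ℕ) (hk : 1 ≤ k) (P : Polynomial ℝ) (hmonic : P.Monic)
    (hdeg : P.natDegree = k + 1) (hcard : P.roots.card = k + 1) (hnodup : P.roots.Nodup) :
    ((Polynomial.derivative P).roots.card = k ∧ (Polynomial.derivative P).roots.Nodup ∧
      ∀ y ∈ (Polynomial.derivative P).roots, ¬ P.IsRoot y) ∧
    ∀ m : ℕ, m ≤ k - 1 → ∃ g : Polynomial ℝ, g.degree < (m : WithBot ℕ) ∧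
      ∀ x ∈ P.roots,
        ((Polynomial.derivative P).roots.map (fun y =>
            y ^ m * ((x - y) ^ 2)⁻¹ * ((P.roots.map (fun x' => ((x' - y) ^ 2)⁻¹)).sum)⁻¹)).sum
          = ((k : ℝ) - (m : ℝ)) / ((k : ℝ) + 1) * x ^ m + g.eval x := by
  have hP0 : P ≠ 0 := hmonic.ne_zero
  set D := derivative P with hDdef
  have hcoeffD : D.coeff k = (k : ℝ) + 1 := by
    rw [hDdef, coeff_derivative]
    have h1 : P.coeff (k + 1) = 1 := by
      have := hmonic.coeff_natDegree
      rwa [hdeg] at this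
    rw [h1]
    ring
  have hD0 : D ≠ 0 := by
    intro h
    rw [h, coeff_zero] at hcoeffD
    have : (0:ℝ) < (k:ℝ) + 1 := by positivity
    linarith [hcoeffD]
  have hDdeg : D.natDegree = k := by
    have h1 : D.natDegree ≤ k := by
      have := natDegree_derivative_le P
      rw [← hDdef, hdeg] at this
      omega
    have h2 : k ≤ D.natDegree := le_natDegree_of_ne_zero (by
      rw [hcoeffD]; positivity)
    omega
  have hcard_le : Multiset.card D.roots ≤ k := hDdeg ▸ D.card_roots'
  have hPfin : P.roots.toFinset.card = k + 1 := by
    rw [Multiset.toFinset_card_eq_card_iff_nodup.2 hnodup, hcard]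
  have hfin_ge : k ≤ D.roots.toFinset.card := by
    have h := P.card_roots_toFinset_le_derivative
    rw [hPfin, ← hDdef] at h
    omega
  have hfin_le := D.roots.toFinset_card_le
  have htcard : Multiset.card D.roots = k := by omega
  have htnodup : D.roots.Nodup :=
    Multiset.toFinset_card_eq_card_iff_nodup.1 (by omega)
  have hdisj : ∀ y ∈ D.roots, ¬ P.IsRoot y := by
    intro y hy hroot
    have hmem : y ∈ P.roots := (mem_roots hP0).2 hroot
    have hcount : P.roots.count y = 1 := Multiset.count_eq_one_of_mem hnodup hmem
    have hmult : P.rootMultiplicity y = 1 := by rwa [count_roots] at hcount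
    have hd : D.rootMultiplicity y = 0 := by
      rw [hDdef, derivative_rootMultiplicity_of_root hroot, hmult]
    have : D.roots.count y = 0 := by rwa [count_roots]
    rw [Multiset.count_eq_zero] at this
    exact this hy
  refine ⟨⟨htcard, htnodup, hdisj⟩, ?_⟩
  intro m hm
  have hmk : m < k := by omega
  have hc : (k : ℝ) + 1 ≠ 0 := by positivity
  set t := D.roots with htdef
  set W := (t.map (fun b => X - C b)).prod with hWdef
  have hWmonic : W.Monic := monic_multiset_prod_of_monic _ _ fun i _ => monic_X_sub_C i
  have hWdegnat : W.natDegree = k := by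
    rw [hWdef, natDegree_multiset_prod_X_sub_C_eq_card, htcard]
  have hDW : D = C ((k:ℝ)+1) * W := by
    have h := C_leadingCoeff_mul_prod_multiset_X_sub_C (p := D) (by rw [← htdef, htcard, hDdeg])
    have hlc : D.leadingCoeff = (k:ℝ) + 1 := by rw [leadingCoeff, hDdeg, hcoeffD]
    rw [hlc] at h
    exact h.symm
  have hPprod : P = (P.roots.map (fun b => X - C b)).prod := by
    have h := C_leadingCoeff_mul_prod_multiset_X_sub_C (p := P) (by rw [hcard, hdeg])
    rw [hmonic.leadingCoeff, map_one, one_mul] at h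
    exact h.symm
  set N : ℝ[X] := X ^ m * P with hNdef
  have hNmonic : N.Monic := (monic_X_pow m).mul hmonic
  have hNdeg : N.natDegree = m + (k + 1) := by
    rw [hNdef, (monic_X_pow m).natDegree_mul hmonic, natDegree_X_pow, hdeg]
  set q : ℝ[X] := N /ₘ W with hqdef
  set r : ℝ[X] := N %ₘ W with hrdef
  have hqr : r + W * q = N := modByMonic_add_div N W
  have hrdeg : r.degree < (Multiset.card t : ℕ) := by
    have h := degree_modByMonic_lt N hWmonic
    rwa [degree_eq_natDegree hWmonic.ne_zero, hWdegnat, ← htcard] at h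
  have hrdegk : r.degree < (k : ℕ) := by rwa [htcard] at hrdeg
  have hqnat : q.natDegree = m + 1 := by
    have h := natDegree_divByMonic N hWmonic
    rw [hNdeg, hWdegnat] at h
    rw [hqdef, h]
    omega
  have hqlead : q.coeff (m + 1) = 1 := by
    have h1 : N.coeff (m + (k+1)) = 1 := by
      have := hNmonic.coeff_natDegree
      rwa [hNdeg] at this
    have h2 : r.coeff (m + (k+1)) = 0 := by
      refine coeff_eq_zero_of_degree_lt (lt_of_lt_of_le hrdegk ?_)
      exact_mod_cast (by omega : k ≤ m + (k+1))
    have h3 : (W * q).coeff (W.natDegree + q.natDegree) = W.leadingCoeff * q.leadingCoeff :=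
      coeff_mul_degree_add_degree W q
    rw [hWmonic.leadingCoeff, one_mul, hWdegnat, hqnat] at h3
    have h4 : k + (m + 1) = m + (k + 1) := by omega
    rw [h4] at h3
    have h5 : q.leadingCoeff = q.coeff (m+1) := by rw [leadingCoeff, hqnat]
    have h6 := congrArg (fun p : ℝ[X] => p.coeff (m + (k+1))) hqr
    simp only [coeff_add] at h6
    rw [h1, h2, zero_add, h3, h5] at h6
    linarith [h6]
  refine ⟨C (((m:ℝ)+1)/((k:ℝ)+1)) * X ^ m - C (((k:ℝ)+1)⁻¹) * derivative q, ?_, ?_⟩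
  · rw [degree_lt_iff_coeff_zero]
    intro n hn
    rw [coeff_sub, coeff_C_mul, coeff_C_mul, coeff_X_pow, coeff_derivative]
    rcases eq_or_lt_of_le hn with h | h
    · rw [← h]
      simp only [if_pos rfl]
      rw [hqlead]
      field_simp
      simp
    · rw [if_neg (by omega), coeff_eq_zero_of_natDegree_lt (by omega : q.natDegree < n + 1)]
      ring
  · intro x hx
    have hxr : P.eval x = 0 := (mem_roots hP0).1 hx
    have hxy : ∀ y ∈ t, x ≠ y := by
      intro y hy hxy
      exact hdisj y hy (by rw [IsRoot, ← hxy]; exact hxr)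
    have hWx_eval : W.eval x = (t.map (fun b => x - b)).prod := by
      rw [hWdef, eval_multiset_prod, Multiset.map_map]
      simp [Function.comp]
    have hWxne : W.eval x ≠ 0 := by
      rw [hWx_eval]
      refine Multiset.prod_ne_zero ?_
      intro h0
      obtain ⟨y, hy, hy0⟩ := Multiset.mem_map.1 h0
      exact hxy y hy (sub_eq_zero.1 hy0)
    have hterm : ∀ y ∈ t,
        y ^ m * ((x - y) ^ 2)⁻¹ * ((P.roots.map (fun x' => ((x' - y) ^ 2)⁻¹)).sum)⁻¹
          = (-((((k:ℝ)+1) * (W.eval x)^2)⁻¹)) * ((r.eval y / dd t y) * ((Wp t y).eval x)^2) := by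
      intro y hy
      have hPy : P.eval y ≠ 0 := fun h => hdisj y hy h
      have hDy : D.eval y = 0 := (mem_roots hD0).1 hy
      have hdd := dd_ne_zero t htnodup y
      have hW'y : (derivative W).eval y = dd t y := by
        rw [hWdef]
        exact eval_multiset_prod_X_sub_C_derivative hy
      have hD'y : (derivative D).eval y = ((k:ℝ)+1) * dd t y := by
        rw [hDW, derivative_mul, derivative_C, zero_mul, zero_add, eval_mul, eval_C, hW'y]
      have hA : (P.roots.map (fun x' => ((x' - y) ^ 2)⁻¹)).sum
          = -((derivative D).eval y) / P.eval y := by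
        have hkey := congrArg (eval y) (sqsum P.roots)
        rw [eval_msum_s5, Multiset.map_map] at hkey
        rw [← hPprod, ← hDdef] at hkey
        simp only [eval_sub, eval_mul, eval_pow, Function.comp_def] at hkey
        rw [hDy] at hkey
        have hLHS : (P.roots.map (fun a =>
              ((((P.roots.erase a).map (fun b => X - C b)).prod).eval y)^2)).sum
            = (P.eval y)^2 * (P.roots.map (fun x' => ((x' - y) ^ 2)⁻¹)).sum := by
          rw [← Multiset.sum_map_mul_left]
          refine congrArg Multiset.sum (Multiset.map_congr rfl ?_)
          intro a ha
          have hfac := congrArg (eval y) (W_factor P.roots a ha)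
          rw [← hPprod] at hfac
          rw [eval_mul, eval_sub, eval_X, eval_C] at hfac
          have hay : a ≠ y := by
            intro h
            exact hPy (h ▸ ((mem_roots hP0).1 ha))
          have hya : y - a ≠ 0 := sub_ne_zero.2 (Ne.symm hay)
          have : (Wp P.roots a).eval y = P.eval y / (y - a) := by
            rw [Wp] at *
            field_simp [hfac]
            rw [hfac]; ring
          rw [show (((P.roots.erase a).map (fun b => X - C b)).prod) = Wp P.roots a from rfl,
            this]
          rw [div_pow]
          rw [show (y - a)^2 = (a - y)^2 by ring]
          field_simp
        rw [hLHS] at hkey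
        rw [eq_div_iff hPy]
        apply mul_left_cancel₀ hPy
        linear_combination hkey
      have hWy : W.eval y = 0 := by
        rw [hWdef, eval_multiset_prod, Multiset.map_map]
        exact Multiset.prod_eq_zero (Multiset.mem_map.2 ⟨y, hy, by simp⟩)
      have hry : r.eval y = y^m * P.eval y := by
        have h := congrArg (eval y) hqr
        rw [eval_add, eval_mul, hWy, zero_mul, add_zero, hNdef, eval_mul, eval_pow, eval_X] at h
        exact h
      have hWfx : W.eval x = (x - y) * (Wp t y).eval x := by
        have h := congrArg (eval x) (W_factor t y hy)
        rw [eval_mul, eval_sub, eval_X, eval_C] at h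
        rw [← hWdef] at h
        exact h
      have heyne : (Wp t y).eval x ≠ 0 := by
        rw [Wp_eval]
        refine Multiset.prod_ne_zero ?_
        intro h0
        obtain ⟨b, hb, hb0⟩ := Multiset.mem_map.1 h0
        exact hxy b (Multiset.mem_of_mem_erase hb) (sub_eq_zero.1 hb0)
      have hxyne : x - y ≠ 0 := sub_ne_zero.2 (hxy y hy)
      rw [hA, hD'y, hry, hWfx]
      field_simp
    have hsum1 : (t.map (fun y =>
          y ^ m * ((x - y) ^ 2)⁻¹ * ((P.roots.map (fun x' => ((x' - y) ^ 2)⁻¹)).sum)⁻¹)).sum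
        = (t.map (fun y => (-((((k:ℝ)+1) * (W.eval x)^2)⁻¹))
            * ((r.eval y / dd t y) * ((Wp t y).eval x)^2))).sum :=
      congrArg Multiset.sum (Multiset.map_congr rfl hterm)
    rw [hsum1, Multiset.sum_map_mul_left, keylemma t htnodup r hrdeg x, ← hWdef]
    have hDx : D.eval x = ((k:ℝ)+1) * W.eval x := by
      rw [hDW, eval_mul, eval_C]
    have hrx : r.eval x = -(W.eval x * q.eval x) := by
      have h := congrArg (eval x) hqr
      rw [eval_add, eval_mul, hNdef, eval_mul, eval_pow, eval_X, hxr, mul_zero] at h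
      linarith [h]
    have hr'x : (derivative r).eval x = x^m * (((k:ℝ)+1) * W.eval x)
        - (derivative W).eval x * q.eval x - W.eval x * (derivative q).eval x := by
      have h := congrArg (eval x) (congrArg derivative hqr)
      rw [hNdef] at h
      rw [derivative_add, derivative_mul, derivative_mul, derivative_X_pow] at h
      simp only [eval_add, eval_mul, eval_pow, eval_X, eval_C] at h
      rw [hxr, mul_zero, ← hDdef, hDx] at h
      linarith [h]
    rw [hrx, hr'x]
    rw [eval_sub, eval_mul, eval_mul, eval_C, eval_C, eval_pow, eval_X]
    field_simp
    ring
end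

section
/- Let k ≥ 1 and let P be a monic real polynomial of degree k + 1 with k + 1 pairwise distinct real roots; then P' has k pairwise distinct real roots, none of which is a root of P. For every root x of P: Σ_{y ∈ roots(P')} [ (x − y)^{−2} · ( Σ_{x' ∈ roots(P)} (x' − y)^{−2} )^{−1} ] = k/(k + 1). -/
open Polynomial Finset

private lemma deriv_prod_lin (u : Finset ℝ) :
    derivative (∏ z ∈ u, (X - C z)) = ∑ y ∈ u, ∏ z ∈ u.erase y, (X - C z) := by
  classical
  rw [Finset.prod_eq_multiset_prod, derivative_prod, Finset.sum_eq_multiset_sum]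
  apply congrArg Multiset.sum
  apply Multiset.map_congr rfl
  intro y hy
  rw [derivative_sub, derivative_X, derivative_C, sub_zero, mul_one, ← Finset.erase_val,
    ← Finset.prod_eq_multiset_prod]

private lemma compl_mem_nhds (u : Finset ℝ) {x : ℝ} (hx : ∀ z ∈ u, x ≠ z) :
    {v : ℝ | ∀ z ∈ u, v ≠ z} ∈ nhds x := by
  have h : {v : ℝ | ∀ z ∈ u, v ≠ z} = (↑u : Set ℝ)ᶜ := by
    ext v
    simp only [Set.mem_compl_iff, Finset.mem_coe, Set.mem_setOf_eq]
    exact ⟨fun h hv => h v hv rfl, fun h z hz he => h (he ▸ hz)⟩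
  rw [h]
  exact (u.finite_toSet.isClosed.isOpen_compl).mem_nhds
    (by intro hv; exact hx x (by simpa using hv) rfl)

theorem stmt9 (k : ℕ) (hk : 1 ≤ k) (P : Polynomial ℝ) (hmonic : P.Monic)
    (hdeg : P.natDegree = k + 1) (hcard : P.roots.card = k + 1) (hnodup : P.roots.Nodup) :
    ((Polynomial.derivative P).roots.card = k ∧ (Polynomial.derivative P).roots.Nodup ∧
      ∀ y ∈ (Polynomial.derivative P).roots, ¬ P.IsRoot y) ∧
    ∀ x ∈ P.roots,
      ((Polynomial.derivative P).roots.map (fun y =>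
          ((x - y) ^ 2)⁻¹ * ((P.roots.map (fun x' => ((x' - y) ^ 2)⁻¹)).sum)⁻¹)).sum
        = (k : ℝ) / ((k : ℝ) + 1) := by
  classical
  obtain ⟨n, rfl⟩ : ∃ n, k = n + 1 := ⟨k - 1, (Nat.succ_pred_eq_of_pos hk).symm⟩
  set D := derivative P with hDdef
  have hP0 : P ≠ 0 := hmonic.ne_zero
  have hptop : P.coeff (n + 2) = 1 := by
    have := hmonic.coeff_natDegree; rwa [hdeg] at this
  have hptop' : P.coeff (n + 1 + 1) = 1 := hptop
  have hDc : ∀ j : ℕ, D.coeff j = P.coeff (j + 1) * ((j : ℝ) + 1) := fun j => by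
    rw [hDdef, coeff_derivative]
  have hn2 : ((n : ℝ) + 2) ≠ 0 := by positivity
  have hDtop : D.coeff (n + 1) = (n : ℝ) + 2 := by
    rw [hDc, hptop']; push_cast; ring
  have hD0 : D ≠ 0 := by
    intro h; rw [h, coeff_zero] at hDtop; exact hn2 hDtop.symm
  have hDnat : D.natDegree = n + 1 := by
    refine le_antisymm ?_ (le_natDegree_of_ne_zero (by rw [hDtop]; exact hn2))
    have h := natDegree_derivative_le P
    rw [hdeg] at h; exact h.trans (by omega)
  have hPtf : P.roots.toFinset.card = n + 2 := by
    rw [Multiset.card_toFinset, Multiset.dedup_eq_self.mpr hnodup, hcard]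
  have hcard_le : Multiset.card D.roots ≤ n + 1 := by
    have := D.card_roots'; rwa [hDnat] at this
  have htf_le : D.roots.toFinset.card ≤ Multiset.card D.roots := D.roots.toFinset_card_le
  have htf_ge : n + 1 ≤ D.roots.toFinset.card := by
    have h := P.card_roots_toFinset_le_derivative
    rw [hPtf, ← hDdef] at h; omega
  have hDcard : Multiset.card D.roots = n + 1 := le_antisymm hcard_le (le_trans htf_ge htf_le)
  have hDnodup : D.roots.Nodup := by
    have h1 : D.roots.dedup = D.roots := by
      apply Multiset.eq_of_le_of_card_le (Multiset.dedup_le _)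
      rw [← Multiset.card_toFinset] at *
      omega
    rw [← h1]; exact D.roots.nodup_dedup
  have hnotroot : ∀ y ∈ D.roots, ¬ P.IsRoot y := by
    intro y hy hPy
    have hDy : D.IsRoot y := isRoot_of_mem_roots hy
    have h2 : 1 < P.rootMultiplicity y := (one_lt_rootMultiplicity_iff_isRoot hP0).2 ⟨hPy, hDy⟩
    have h3 := Multiset.nodup_iff_count_le_one.1 hnodup y
    rw [count_roots] at h3
    omega
  refine ⟨⟨hDcard, hDnodup, hnotroot⟩, ?_⟩
  intro x hx
  set s : Finset ℝ := P.roots.toFinset with hsdef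
  set t : Finset ℝ := D.roots.toFinset with htdef
  have hsval : s.1 = P.roots := by
    rw [hsdef, Multiset.toFinset_val, Multiset.dedup_eq_self.mpr hnodup]
  have htval : t.1 = D.roots := by
    rw [htdef, Multiset.toFinset_val, Multiset.dedup_eq_self.mpr hDnodup]
  have htcard : t.card = n + 1 := le_antisymm (htf_le.trans_eq hDcard) htf_ge
  have hroot_s : ∀ z ∈ s, P.eval z = 0 := fun z hz =>
    (mem_roots hP0).1 (Multiset.mem_toFinset.1 hz)
  have hyP : ∀ y ∈ t, P.eval y ≠ 0 := fun y hy =>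
    hnotroot y (Multiset.mem_toFinset.1 hy)
  have hroot_t : ∀ y ∈ t, D.eval y = 0 := fun y hy =>
    (mem_roots hD0).1 (Multiset.mem_toFinset.1 hy)
  have hx0 : P.eval x = 0 := (mem_roots hP0).1 hx
  have hxt : ∀ z ∈ t, x ≠ z := by
    intro z hz h; exact hyP z hz (h ▸ hx0)
  have hst : ∀ y ∈ t, ∀ z ∈ s, y ≠ z := fun y hy z hz h =>
    hyP y hy (by rw [h]; exact hroot_s z hz)
  -- factorizations
  have hPfac : P = ∏ z ∈ s, (X - C z) := by
    have h := C_leadingCoeff_mul_prod_multiset_X_sub_C (p := P) (by rw [hcard, hdeg])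
    rw [hmonic.leadingCoeff, map_one, one_mul] at h
    rw [← h, Finset.prod_eq_multiset_prod, hsval]
  have hDlead : D.leadingCoeff = (n : ℝ) + 2 := by
    rw [leadingCoeff, hDnat, hDtop]
  have hDfac : D = C ((n : ℝ) + 2) * ∏ z ∈ t, (X - C z) := by
    have h := C_leadingCoeff_mul_prod_multiset_X_sub_C (p := D) (by rw [hDcard, hDnat])
    rw [hDlead] at h
    rw [← h, Finset.prod_eq_multiset_prod, htval]
  have hPeval : ∀ u : ℝ, P.eval u = ∏ z ∈ s, (u - z) := by
    intro u; conv_lhs => rw [hPfac]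
    simp [eval_prod]
  have hDeval : ∀ u : ℝ, D.eval u = ((n : ℝ) + 2) * ∏ z ∈ t, (u - z) := by
    intro u; conv_lhs => rw [hDfac]
    simp [eval_prod]
  have hDx : D.eval x ≠ 0 := by
    rw [hDeval]
    exact mul_ne_zero hn2 (Finset.prod_ne_zero_iff.mpr fun z hz => sub_ne_zero.mpr (hxt z hz))
  have hderivP : D = ∑ y ∈ s, ∏ z ∈ s.erase y, (X - C z) := by
    rw [hDdef]
    conv_lhs => rw [hPfac]
    exact deriv_prod_lin s
  -- evaluation of the second derivative at critical points
  have hD'eval : ∀ y ∈ t, (derivative D).eval y = ((n : ℝ) + 2) * ∏ z ∈ t.erase y, (y - z) := by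
    intro y hy
    have h : derivative D = C ((n : ℝ) + 2) * ∑ y' ∈ t, ∏ z ∈ t.erase y', (X - C z) := by
      conv_lhs => rw [hDfac]
      rw [derivative_C_mul, deriv_prod_lin]
    rw [h, eval_mul, eval_C, eval_finset_sum]
    congr 1
    have h2 : ∑ y' ∈ t, eval y (∏ z ∈ t.erase y', (X - C z))
        = eval y (∏ z ∈ t.erase y, (X - C z)) := by
      refine Finset.sum_eq_single y ?_ (fun h => absurd hy h)
      intro y' hy' hne
      rw [eval_prod]
      refine Finset.prod_eq_zero (i := y) (Finset.mem_erase.mpr ⟨Ne.symm hne, hy⟩) ?_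
      simp
    rw [h2, eval_prod]
    simp
  -- the inner sum identity
  have key1 : ∀ y ∈ t, (∑ z ∈ s, ((z - y) ^ 2)⁻¹) = -((derivative D).eval y / P.eval y) := by
    intro y hy
    have hys : ∀ z ∈ s, y ≠ z := hst y hy
    have hyP' := hyP y hy
    have hfun2 : ∀ u : ℝ, (∀ z ∈ s, u ≠ z) → D.eval u / P.eval u = ∑ z ∈ s, (u - z)⁻¹ := by
      intro u hu
      have hPu : P.eval u ≠ 0 := by
        rw [hPeval]
        exact Finset.prod_ne_zero_iff.mpr fun z hz => sub_ne_zero.mpr (hu z hz)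
      rw [div_eq_iff hPu, Finset.sum_mul]
      have h1 : ∀ z ∈ s, (u - z)⁻¹ * P.eval u = ∏ w ∈ s.erase z, (u - w) := by
        intro z hz
        rw [hPeval, ← Finset.mul_prod_erase s _ hz, ← mul_assoc,
          inv_mul_cancel₀ (sub_ne_zero.mpr (hu z hz)), one_mul]
      rw [Finset.sum_congr rfl h1, hderivP, eval_finset_sum]
      exact Finset.sum_congr rfl fun z hz => by simp [eval_prod]
    have hU : {u : ℝ | ∀ z ∈ s, u ≠ z} ∈ nhds y := compl_mem_nhds s hys
    have h1 := (Polynomial.hasDerivAt D y).div (Polynomial.hasDerivAt P y) hyP'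
    have h2 : HasDerivAt (fun u => ∑ z ∈ s, (u - z)⁻¹) (∑ z ∈ s, -(((z - y) ^ 2)⁻¹)) y := by
      refine HasDerivAt.fun_sum fun z hz => ?_
      have h := ((hasDerivAt_id y).sub_const z).inv (sub_ne_zero.mpr (hys z hz))
      refine h.congr_deriv ?_
      rw [show ((z - y) ^ 2 : ℝ) = (y - z) ^ 2 from by ring]
      simp [neg_div]
    have heq : (fun u => ∑ z ∈ s, (u - z)⁻¹) =ᶠ[nhds y] (fun u => D.eval u / P.eval u) :=
      Filter.eventuallyEq_of_mem hU fun u hu => (hfun2 u hu).symm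
    have h3 := (heq.hasDerivAt_iff.mpr h1).unique h2
    rw [← hDdef, hroot_t y hy] at h3
    have h4 : ∑ z ∈ s, -(((z - y) ^ 2)⁻¹) = -(∑ z ∈ s, ((z - y) ^ 2)⁻¹) := by
      rw [← Finset.sum_neg_distrib]
    rw [h4] at h3
    have h6 : (eval y (derivative D) * eval y P - 0 * 0) / eval y P ^ 2
        = eval y (derivative D) / eval y P := by
      field_simp
      ring
    rw [h6] at h3
    linarith [h3]
  -- the partial fraction decomposition
  set a : ℝ := ((n : ℝ) + 2)⁻¹ with hadef
  set b : ℝ := P.coeff (n + 1) * (((n : ℝ) + 2) ^ 2)⁻¹ with hbdef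
  set A : ℝ[X] := P - (C a * X + C b) * D with hAdef
  set c : ℝ → ℝ := fun y => P.eval y * (∏ z ∈ t.erase y, (y - z))⁻¹ with hcdef
  set B : ℝ[X] := ∑ y ∈ t, C (c y) * ∏ z ∈ t.erase y, (X - C z) with hBdef
  have hAdeglt : A.degree < ((n + 1 : ℕ) : WithBot ℕ) := by
    rw [degree_lt_iff_coeff_zero]
    intro m hm
    obtain ⟨m', rfl⟩ : ∃ m', m = m' + 1 := ⟨m - 1, by omega⟩
    rw [hAdef, coeff_sub, add_mul, coeff_add, mul_assoc, coeff_C_mul, coeff_C_mul, coeff_X_mul]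
    have h3 : m' = n ∨ m' = n + 1 ∨ n + 2 ≤ m' := by omega
    rcases h3 with rfl | rfl | h3
    · rw [hDc, hDc, hptop', hadef, hbdef]
      push_cast
      field_simp
      ring
    · have h0 : P.coeff (n + 1 + 1 + 1) = 0 := coeff_eq_zero_of_natDegree_lt (by rw [hdeg]; omega)
      rw [hDc, hDc, hptop', h0, hadef]
      push_cast
      field_simp
      ring
    · have h0 : P.coeff (m' + 1) = 0 := coeff_eq_zero_of_natDegree_lt (by rw [hdeg]; omega)
      have h1 : D.coeff m' = 0 := coeff_eq_zero_of_natDegree_lt (by rw [hDnat]; omega)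
      have h2 : D.coeff (m' + 1) = 0 := coeff_eq_zero_of_natDegree_lt (by rw [hDnat]; omega)
      rw [h0, h1, h2]; ring
  have hBdeglt : B.degree < ((n + 1 : ℕ) : WithBot ℕ) := by
    have hnat : B.natDegree ≤ n := by
      rw [hBdef]
      refine natDegree_sum_le_of_forall_le t _ fun y hy => ?_
      refine (natDegree_C_mul_le _ _).trans ?_
      rw [Finset.prod_eq_multiset_prod, natDegree_multiset_prod_X_sub_C_eq_card]
      have : Multiset.card (t.erase y).val = (t.erase y).card := rfl
      rw [this, Finset.card_erase_of_mem hy, htcard]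
      omega
    rcases eq_or_ne B 0 with h | h
    · rw [h, degree_zero]; exact WithBot.bot_lt_coe _
    · exact (natDegree_lt_iff_degree_lt h).1 (by omega)
  have hevalAB : ∀ u ∈ t, A.eval u = B.eval u := by
    intro u hu
    have hA : A.eval u = P.eval u := by
      rw [hAdef]; simp [hroot_t u hu]
    have hprodne : (∏ z ∈ t.erase u, (u - z)) ≠ 0 :=
      Finset.prod_ne_zero_iff.mpr fun z hz =>
        sub_ne_zero.mpr (Ne.symm (Finset.mem_erase.mp hz).1)
    have hB : B.eval u = P.eval u := by
      rw [hBdef, eval_finset_sum]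
      have hB1 : ∑ y ∈ t, eval u (C (c y) * ∏ z ∈ t.erase y, (X - C z))
          = eval u (C (c u) * ∏ z ∈ t.erase u, (X - C z)) := by
        refine Finset.sum_eq_single u ?_ (fun h => absurd hu h)
        intro y hy hne
        rw [eval_mul, eval_prod]
        refine mul_eq_zero_of_right _
          (Finset.prod_eq_zero (i := u) (Finset.mem_erase.mpr ⟨Ne.symm hne, hu⟩) ?_)
        simp
      rw [hB1, eval_mul, eval_C, eval_prod]
      simp only [eval_sub, eval_X, eval_C, hcdef]
      field_simp
    rw [hA, hB]
  have hAB : A = B := by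
    refine Polynomial.eq_of_degrees_lt_of_eval_finset_eq t ?_ ?_ hevalAB
    · rw [htcard]; exact_mod_cast hAdeglt
    · rw [htcard]; exact_mod_cast hBdeglt
  -- the rational function identity
  set w : ℝ → ℝ := fun y => c y * ((n : ℝ) + 2)⁻¹ with hwdef
  have hfun : ∀ u : ℝ, (∀ z ∈ t, u ≠ z) →
      P.eval u / D.eval u - (a * u + b) = ∑ y ∈ t, w y * (u - y)⁻¹ := by
    intro u hu
    have hDu : D.eval u ≠ 0 := by
      rw [hDeval]
      exact mul_ne_zero hn2 (Finset.prod_ne_zero_iff.mpr fun z hz => sub_ne_zero.mpr (hu z hz))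
    have hterm : ∀ y ∈ t, w y * (u - y)⁻¹ * D.eval u = c y * ∏ z ∈ t.erase y, (u - z) := by
      intro y hy
      rw [hDeval, hwdef]
      simp only
      rw [← Finset.mul_prod_erase t _ hy]
      have huy : u - y ≠ 0 := sub_ne_zero.mpr (hu y hy)
      field_simp
    have hsum : (∑ y ∈ t, w y * (u - y)⁻¹) * D.eval u = A.eval u := by
      rw [Finset.sum_mul, Finset.sum_congr rfl hterm, hAB, hBdef, eval_finset_sum]
      exact Finset.sum_congr rfl fun y hy => by simp [eval_prod]
    have hAev : A.eval u = P.eval u - (a * u + b) * D.eval u := by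
      rw [hAdef]; simp
    have h9 : (∑ y ∈ t, w y * (u - y)⁻¹) = (P.eval u - (a * u + b) * D.eval u) / D.eval u := by
      rw [eq_div_iff hDu]; exact hsum.trans hAev
    rw [h9, sub_div, mul_div_cancel_right₀ _ hDu]
  -- differentiate at x
  have hUx : {u : ℝ | ∀ z ∈ t, u ≠ z} ∈ nhds x := compl_mem_nhds t hxt
  have h1 := (Polynomial.hasDerivAt P x).div (Polynomial.hasDerivAt D x) hDx
  have h2 : HasDerivAt (fun u : ℝ => a * u + b) a x := by
    simpa using ((hasDerivAt_id x).const_mul a).add_const b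
  have h3 := h1.sub h2
  have heq2 : (fun u => ∑ y ∈ t, w y * (u - y)⁻¹)
      =ᶠ[nhds x] (fun u => P.eval u / D.eval u - (a * u + b)) :=
    Filter.eventuallyEq_of_mem hUx fun u hu => (hfun u hu).symm
  have h4 := heq2.hasDerivAt_iff.mpr h3
  have h5 : HasDerivAt (fun u => ∑ y ∈ t, w y * (u - y)⁻¹)
      (∑ y ∈ t, w y * (-(((x - y) ^ 2)⁻¹))) x := by
    refine HasDerivAt.fun_sum fun y hy => ?_
    have h := (((hasDerivAt_id x).sub_const y).inv (sub_ne_zero.mpr (hxt y hy))).const_mul (w y)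
    refine h.congr_deriv ?_
    simp only [id_eq]
    ring
  have hmain := h4.unique h5
  rw [← hDdef, hx0] at hmain
  have hval : (eval x D * eval x D - 0 * eval x (derivative D)) / eval x D ^ 2 - a = 1 - a := by
    rw [zero_mul, sub_zero, ← sq, div_self (pow_ne_zero 2 hDx)]
  rw [hval] at hmain
  -- conclude
  have hsum_t : ∀ g : ℝ → ℝ, (D.roots.map g).sum = ∑ y ∈ t, g y := by
    intro g; rw [Finset.sum_eq_multiset_sum, htval]
  have hsum_s : ∀ g : ℝ → ℝ, (P.roots.map g).sum = ∑ z ∈ s, g z := by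
    intro g; rw [Finset.sum_eq_multiset_sum, hsval]
  have hTinv : ∀ y ∈ t, ((P.roots.map (fun z => ((z - y) ^ 2)⁻¹)).sum)⁻¹ = -(w y) := by
    intro y hy
    have hprodne : (∏ z ∈ t.erase y, (y - z)) ≠ 0 :=
      Finset.prod_ne_zero_iff.mpr fun z hz =>
        sub_ne_zero.mpr (Ne.symm (Finset.mem_erase.mp hz).1)
    have hPy := hyP y hy
    rw [hsum_s, key1 y hy, hD'eval y hy, hwdef, hcdef]
    simp only
    field_simp
  rw [hsum_t]
  calc ∑ y ∈ t, ((x - y) ^ 2)⁻¹ * ((P.roots.map (fun x' => ((x' - y) ^ 2)⁻¹)).sum)⁻¹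
      = ∑ y ∈ t, w y * (-(((x - y) ^ 2)⁻¹)) :=
        Finset.sum_congr rfl fun y hy => by rw [hTinv y hy]; ring
    _ = 1 - a := hmain.symm
    _ = ((n + 1 : ℕ) : ℝ) / (((n + 1 : ℕ) : ℝ) + 1) := by
        rw [hadef]; push_cast; field_simp; ring
end

section
/- Let P be a monic real polynomial of degree N with N pairwise distinct real roots. For 1 ≤ k ≤ N set P_k = (k!/N!)·(d/dX)^{N−k} P, a monic polynomial of degree k whose roots x_1^k < x_2^k < ⋯ < x_k^k are real and pairwise distinct. For 1 ≤ k ≤ N − 1 define the k × (k+1) stochastic matrix α^k by α^k_{a,b} = (x_a^k − x_b^{k+1})^{−2} / Σ_{b'=1}^{k+1} (x_a^k − x_{b'}^{k+1})^{−2}, and for 1 ≤ k ≤ ℓ ≤ N define the k × ℓ matrix K^{k,ℓ} recursively by K^{k,k} = Id and K^{k,ℓ+1} = K^{k,ℓ}·α^ℓ. Then every entry of K^{k,ℓ} satisfies 0 ≤ K^{k,ℓ}_{a,b} ≤ k/ℓ. -/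
open Polynomial

private lemma sum_range_getD (l : List ℝ) (f : ℝ → ℝ) :
    ∑ i ∈ Finset.range l.length, f (l.getD i 0) = (l.map f).sum := by
  induction l with
  | nil => simp
  | cons a t ih =>
    rw [List.length_cons, Finset.sum_range_succ']
    simp only [List.getD_cons_succ, List.getD_cons_zero, List.map_cons, List.sum_cons, ih]
    ring

private lemma sum_Icc_sorted (s : Multiset ℝ) (hn : s.Nodup) (f : ℝ → ℝ) :
    ∑ a ∈ Finset.Icc 1 (Multiset.card s), f ((s.sort (· ≤ ·)).getD (a - 1) 0)
      = ∑ y ∈ s.toFinset, f y := by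
  have h1 : ∑ a ∈ Finset.Icc 1 (Multiset.card s), f ((s.sort (· ≤ ·)).getD (a - 1) 0)
      = ∑ i ∈ Finset.range (Multiset.card s), f ((s.sort (· ≤ ·)).getD i 0) := by
    refine Finset.sum_nbij' (fun a => a - 1) (fun i => i + 1) ?_ ?_ ?_ ?_ ?_
    · intro a ha; simp only [Finset.mem_Icc, Finset.mem_range] at *; omega
    · intro a ha; simp only [Finset.mem_Icc, Finset.mem_range] at *; omega
    · intro a ha; simp only [Finset.mem_Icc, Finset.mem_range] at *; omega
    · intro a ha; simp only [Finset.mem_Icc, Finset.mem_range] at *; omega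
    · intro a ha; rfl
  rw [h1]
  have h2 : (s.sort (· ≤ ·)).length = Multiset.card s := Multiset.length_sort _
  rw [← h2, sum_range_getD]
  have h3 : s.toFinset.sum f = (Multiset.map f s).sum := by
    rw [Finset.sum_eq_multiset_sum]
    congr 1
    rw [Multiset.toFinset_val, Multiset.dedup_eq_self.2 hn]
  rw [h3]
  have h4 : (Multiset.map f s).sum = (List.map f (s.sort (· ≤ ·))).sum := by
    conv_lhs => rw [← Multiset.sort_eq s (· ≤ ·)]
    rw [Multiset.map_coe, Multiset.sum_coe]
  rw [h4]

private lemma mem_of_getD (s : Multiset ℝ) {a : ℕ} (ha : 1 ≤ a) (hb : a ≤ Multiset.card s) :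
    ((s.sort (· ≤ ·)).getD (a - 1) 0) ∈ s := by
  have hlen : a - 1 < (s.sort (· ≤ ·)).length := by rw [Multiset.length_sort]; omega
  rw [List.getD_eq_getElem _ _ hlen]
  have hm := List.getElem_mem hlen
  rwa [← Multiset.mem_sort (· ≤ ·)]

private lemma derivative_prod_finset (F : Finset ℝ) :
    derivative (∏ w ∈ F, (X - C w)) = ∑ z ∈ F, ∏ w ∈ F.erase z, (X - C w) := by
  induction F using Finset.induction_on with
  | empty => simp
  | insert _ _ ha _ =>
    rename_i a F ih
    rw [Finset.prod_insert ha, derivative_mul, ih, Finset.sum_insert ha, Finset.erase_insert ha]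
    simp only [derivative_sub, derivative_X, derivative_C, sub_zero, one_mul]
    rw [Finset.mul_sum]
    congr 1
    refine Finset.sum_congr rfl fun z hz => ?_
    rw [Finset.erase_insert_of_ne (by rintro rfl; exact ha hz),
      Finset.prod_insert (fun h => ha (Finset.mem_of_mem_erase h))]

private lemma eval_deriv_at_root (F : Finset ℝ) {z : ℝ} (hz : z ∈ F) :
    eval z (derivative (∏ w ∈ F, (X - C w))) = ∏ w ∈ F.erase z, (z - w) := by
  rw [derivative_prod_finset, eval_finset_sum]
  rw [Finset.sum_eq_single z]
  · simp [eval_prod]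
  · intro b hb hbz
    simp only [eval_prod, eval_sub, eval_X, eval_C]
    exact Finset.prod_eq_zero (Finset.mem_erase.2 ⟨hbz.symm, hz⟩) (sub_self z)
  · intro h; exact absurd hz h

private lemma prod_toFinset_eq {q : ℝ[X]} (hq : q.Monic) (hc : Multiset.card q.roots = q.natDegree)
    (hn : q.roots.Nodup) : ∏ w ∈ q.roots.toFinset, (X - C w) = q := by
  have h := prod_multiset_X_sub_C_of_monic_of_roots_card_eq hq hc
  conv_rhs => rw [← h]
  rw [Finset.prod_eq_multiset_prod]
  congr 1
  rw [Multiset.toFinset_val, Multiset.dedup_eq_self.2 hn]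

private lemma rolle_step (m : ℕ) (q : ℝ[X]) (hqd : q.natDegree = m + 1)
    (hqc : Multiset.card q.roots = m + 1) (hqn : q.roots.Nodup) :
    Multiset.card (derivative q).roots = m ∧ (derivative q).roots.Nodup ∧
      Disjoint (derivative q).roots.toFinset q.roots.toFinset := by
  have h1 : q.roots.toFinset.card = m + 1 := by
    rw [Multiset.toFinset_card_eq_card_iff_nodup.2 hqn, hqc]
  have h2 := q.card_roots_toFinset_le_card_roots_derivative_diff_roots_succ
  have h3 : Multiset.card (derivative q).roots ≤ m := by
    calc Multiset.card (derivative q).roots ≤ (derivative q).natDegree := (derivative q).card_roots'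
    _ ≤ q.natDegree - 1 := natDegree_derivative_le q
    _ = m := by omega
  have h4 : (derivative q).roots.toFinset.card ≤ Multiset.card (derivative q).roots :=
    Multiset.toFinset_card_le _
  have h5 : ((derivative q).roots.toFinset \ q.roots.toFinset).card ≤
      (derivative q).roots.toFinset.card := Finset.card_le_card Finset.sdiff_subset
  refine ⟨by omega, Multiset.toFinset_card_eq_card_iff_nodup.1 (by omega), ?_⟩
  have h6 : (derivative q).roots.toFinset \ q.roots.toFinset = (derivative q).roots.toFinset :=
    Finset.eq_of_subset_of_card_le Finset.sdiff_subset (by omega)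
  exact Finset.sdiff_eq_self_iff_disjoint.1 h6

private lemma key_lemma (k : ℕ) (hk : 1 ≤ k) (p q : ℝ[X]) (hp : p.Monic) (hq : q.Monic)
    (hpd : p.natDegree = k) (hqd : q.natDegree = k + 1)
    (hpc : Multiset.card p.roots = k) (hqc : Multiset.card q.roots = k + 1)
    (hpn : p.roots.Nodup) (hqn : q.roots.Nodup)
    (hder : derivative q = C ((k : ℝ) + 1) * p)
    (hdisj : Disjoint p.roots.toFinset q.roots.toFinset) :
    (∀ y ∈ p.roots.toFinset, 0 < ∑ z ∈ q.roots.toFinset, ((y - z) ^ 2)⁻¹) ∧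
      ∀ z ∈ q.roots.toFinset,
        ∑ y ∈ p.roots.toFinset,
          (((y - z) ^ 2)⁻¹ / ∑ z' ∈ q.roots.toFinset, ((y - z') ^ 2)⁻¹) =
          (k : ℝ) / ((k : ℝ) + 1) := by
  classical
  set Fp := p.roots.toFinset with hFpdef
  set Fq := q.roots.toFinset with hFqdef
  have hp0 : p ≠ 0 := hp.ne_zero
  have hq0 : q ≠ 0 := hq.ne_zero
  have hFp : ∏ w ∈ Fp, (X - C w) = p := prod_toFinset_eq hp (by rw [hpc, hpd]) hpn
  have hFq : ∏ w ∈ Fq, (X - C w) = q := prod_toFinset_eq hq (by rw [hqc, hqd]) hqn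
  have hFpc : Fp.card = k := by
    rw [hFpdef, Multiset.toFinset_card_eq_card_iff_nodup.2 hpn, hpc]
  have hFqc : Fq.card = k + 1 := by
    rw [hFqdef, Multiset.toFinset_card_eq_card_iff_nodup.2 hqn, hqc]
  have hyp0 : ∀ y ∈ Fp, eval y p = 0 := fun y hy =>
    isRoot_of_mem_roots (Multiset.mem_toFinset.1 hy)
  have hzq0 : ∀ z ∈ Fq, eval z q = 0 := fun z hz =>
    isRoot_of_mem_roots (Multiset.mem_toFinset.1 hz)
  have hqy : ∀ y ∈ Fp, eval y q ≠ 0 := by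
    intro y hy hyq
    exact (Finset.disjoint_left.1 hdisj hy) (Multiset.mem_toFinset.2 ((mem_roots hq0).2 hyq))
  have hpz : ∀ z ∈ Fq, eval z p ≠ 0 := by
    intro z hz hzp
    exact (Finset.disjoint_right.1 hdisj hz) (Multiset.mem_toFinset.2 ((mem_roots hp0).2 hzp))
  have hne : ∀ y ∈ Fp, ∀ z ∈ Fq, y ≠ z := by
    intro y hy z hz h; subst h; exact hqy y hy (hzq0 y hz)
  have hevalq : ∀ t, eval t q = ∏ w ∈ Fq, (t - w) := by
    intro t; rw [← hFq]; simp [eval_prod]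
  have hevalp : ∀ t, eval t p = ∏ w ∈ Fp, (t - w) := by
    intro t; rw [← hFp]; simp [eval_prod]
  have hevalp' : ∀ y ∈ Fp, eval y (derivative p) = ∏ w ∈ Fp.erase y, (y - w) := by
    intro y hy; rw [← hFp]; exact eval_deriv_at_root Fp hy
  have hevalq' : ∀ z ∈ Fq, eval z (derivative q) = ∏ w ∈ Fq.erase z, (z - w) := by
    intro z hz; rw [← hFq]; exact eval_deriv_at_root Fq hz
  have hD : ∀ y ∈ Fp, eval y (derivative p) ≠ 0 := by
    intro y hy
    rw [hevalp' y hy]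
    exact Finset.prod_ne_zero_iff.2 fun w hw =>
      sub_ne_zero.2 fun h => (Finset.mem_erase.1 hw).1 (by rw [h])
  -- the open set where q ≠ 0
  have hU : IsOpen {t : ℝ | eval t q ≠ 0} := by
    have : {t : ℝ | eval t q ≠ 0} = (fun t => eval t q) ⁻¹' {0}ᶜ := rfl
    rw [this]
    exact (q.continuous_aeval).isOpen_preimage _ isOpen_compl_singleton
  -- f = g on U
  have hfg : ∀ t ∈ {t : ℝ | eval t q ≠ 0},
      eval t (derivative q) / eval t q = ∑ z ∈ Fq, (t - z)⁻¹ := by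
    intro t ht
    have htz : ∀ z ∈ Fq, t - z ≠ 0 := by
      intro z hz h
      apply ht
      rw [hevalq t]
      exact Finset.prod_eq_zero hz h
    have hq' : eval t (derivative q) = ∑ z ∈ Fq, ∏ w ∈ Fq.erase z, (t - w) := by
      rw [← hFq, derivative_prod_finset, eval_finset_sum]
      refine Finset.sum_congr rfl fun z hz => by simp [eval_prod]
    rw [hq', hevalq t, Finset.sum_div]
    refine Finset.sum_congr rfl fun z hz => ?_
    rw [← Finset.mul_prod_erase Fq (fun w => t - w) hz]
    have hprod : ∏ w ∈ Fq.erase z, (t - w) ≠ 0 :=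
      Finset.prod_ne_zero_iff.2 fun w hw => htz w (Finset.mem_of_mem_erase hw)
    rw [mul_comm, ← div_div, div_self hprod, one_div]
  -- the S formula
  have hS : ∀ y ∈ Fp, ∑ z ∈ Fq, ((y - z) ^ 2)⁻¹ =
      -(((k : ℝ) + 1) * eval y (derivative p)) / eval y q := by
    intro y hy
    have hyU : y ∈ {t : ℝ | eval t q ≠ 0} := hqy y hy
    have hd1 : HasDerivAt (fun t => eval t (derivative q) / eval t q)
        ((eval y (derivative (derivative q)) * eval y q -
          eval y (derivative q) * eval y (derivative q)) / (eval y q) ^ 2) y :=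
      ((derivative q).hasDerivAt y).div (q.hasDerivAt y) (hqy y hy)
    have hd2 : HasDerivAt (fun t => ∑ z ∈ Fq, (t - z)⁻¹)
        (∑ z ∈ Fq, -((y - z) ^ 2)⁻¹) y := by
      refine HasDerivAt.fun_sum fun z hz => ?_
      have h := ((hasDerivAt_id y).sub_const z).inv (sub_ne_zero.2 (hne y hy z hz))
      refine HasDerivAt.congr_deriv h ?_
      rw [neg_div, one_div]
      norm_num
    have hev : (fun t => eval t (derivative q) / eval t q) =ᶠ[nhds y]
        (fun t => ∑ z ∈ Fq, (t - z)⁻¹) :=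
      Filter.eventuallyEq_of_mem (hU.mem_nhds hyU) hfg
    have hd1' : HasDerivAt (fun t => ∑ z ∈ Fq, (t - z)⁻¹)
        ((eval y (derivative (derivative q)) * eval y q -
          eval y (derivative q) * eval y (derivative q)) / (eval y q) ^ 2) y :=
      hd1.congr_of_eventuallyEq hev.symm
    have huniq := hd2.unique hd1'
    have hq'y : eval y (derivative q) = 0 := by
      rw [hder, eval_mul, eval_C, hyp0 y hy, mul_zero]
    have hq''y : eval y (derivative (derivative q)) = ((k : ℝ) + 1) * eval y (derivative p) := by
      rw [hder, derivative_C_mul, eval_mul, eval_C]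
    rw [hq'y, hq''y] at huniq
    have : ∑ z ∈ Fq, ((y - z) ^ 2)⁻¹ = -∑ z ∈ Fq, -((y - z) ^ 2)⁻¹ := by
      rw [← Finset.sum_neg_distrib]; simp
    rw [this, huniq]
    have hqyne := hqy y hy
    field_simp
    ring
  have hpos : ∀ y ∈ Fp, 0 < ∑ z ∈ Fq, ((y - z) ^ 2)⁻¹ := by
    intro y hy
    have hFqne : Fq.Nonempty := Finset.card_pos.1 (by omega)
    refine Finset.sum_pos (fun z hz => ?_) hFqne
    have h := sub_ne_zero.2 (hne y hy z hz)
    exact inv_pos.2 (pow_two_pos_of_ne_zero h)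
  refine ⟨hpos, ?_⟩
  -- identity 2
  intro z hz
  set Q : ℝ[X] := ∏ w ∈ Fq.erase z, (X - C w) with hQdef
  have hQmonic : Q.Monic := monic_prod_of_monic _ _ fun w _ => monic_X_sub_C w
  have hQdeg : Q.natDegree = k := by
    rw [hQdef, natDegree_prod _ _ fun w _ => (monic_X_sub_C w).ne_zero]
    simp only [natDegree_X_sub_C, Finset.sum_const, smul_eq_mul, mul_one]
    rw [Finset.card_erase_of_mem hz, hFqc]
    omega
  have hevalQ : ∀ t, eval t Q = ∏ w ∈ Fq.erase z, (t - w) := by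
    intro t; rw [hQdef]; simp [eval_prod]
  have hQq : ∀ t, (t - z) * eval t Q = eval t q := by
    intro t
    rw [hevalQ t, hevalq t, Finset.mul_prod_erase Fq (fun w => t - w) hz]
  have hQz : eval z Q = ((k : ℝ) + 1) * eval z p := by
    have h1 := hevalq' z hz
    rw [hder, eval_mul, eval_C] at h1
    rw [hevalQ z, ← h1]
  -- the interpolation polynomial
  set G : ℝ[X] := Q - p - ∑ y ∈ Fp, C (eval y Q / eval y (derivative p)) *
      ∏ y' ∈ Fp.erase y, (X - C y') with hGdef
  have hGeval : ∀ y₀ ∈ Fp, eval y₀ G = 0 := by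
    intro y₀ hy₀
    rw [hGdef]
    simp only [eval_sub, eval_finset_sum, eval_mul, eval_C, eval_prod, eval_sub, eval_X]
    rw [hyp0 y₀ hy₀, Finset.sum_eq_single y₀]
    · rw [← hevalp' y₀ hy₀, div_mul_cancel₀ _ (hD y₀ hy₀)]
      ring
    · intro y hy hyy₀
      rw [Finset.prod_eq_zero (Finset.mem_erase.2 ⟨hyy₀.symm, hy₀⟩) (sub_self y₀), mul_zero]
    · intro h; exact absurd hy₀ h
  have hdegG : G.degree < ((k : ℕ) : WithBot ℕ) := by
    have h1 : (Q - p).degree < ((k : ℕ) : WithBot ℕ) := by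
      have hdQ : Q.degree = ((k : ℕ) : WithBot ℕ) := by
        rw [degree_eq_natDegree hQmonic.ne_zero, hQdeg]
      have hdQP : Q.degree = p.degree := by
        rw [hdQ, degree_eq_natDegree hp0, hpd]
      have := degree_sub_lt hdQP hQmonic.ne_zero
        (hQmonic.leadingCoeff.trans hp.leadingCoeff.symm)
      rwa [hdQ] at this
    have h2 : (∑ y ∈ Fp, C (eval y Q / eval y (derivative p)) *
        ∏ y' ∈ Fp.erase y, (X - C y')).degree < ((k : ℕ) : WithBot ℕ) := by
      refine lt_of_le_of_lt (degree_sum_le _ _) ?_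
      rw [Finset.sup_lt_iff (by exact_mod_cast WithBot.bot_lt_coe k)]
      intro y hy
      refine lt_of_le_of_lt (degree_mul_le _ _) ?_
      have hm : (∏ y' ∈ Fp.erase y, (X - C y')).Monic :=
        monic_prod_of_monic _ _ fun _ _ => monic_X_sub_C _
      have hprodd : (∏ y' ∈ Fp.erase y, (X - C y')).degree = ((k - 1 : ℕ) : WithBot ℕ) := by
        rw [degree_eq_natDegree hm.ne_zero,
          natDegree_prod _ _ fun w _ => (monic_X_sub_C w).ne_zero]
        simp only [natDegree_X_sub_C, Finset.sum_const, smul_eq_mul, mul_one]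
        rw [Finset.card_erase_of_mem hy, hFpc]
      calc (C (eval y Q / eval y (derivative p))).degree +
            (∏ y' ∈ Fp.erase y, (X - C y')).degree
          ≤ 0 + ((k - 1 : ℕ) : WithBot ℕ) := add_le_add degree_C_le hprodd.le
        _ = ((k - 1 : ℕ) : WithBot ℕ) := zero_add _
        _ < ((k : ℕ) : WithBot ℕ) := by
            have hlt : (k - 1 : ℕ) < k := by omega
            exact_mod_cast hlt
    calc G.degree ≤ max (Q - p).degree (∑ y ∈ Fp, C (eval y Q / eval y (derivative p)) *
          ∏ y' ∈ Fp.erase y, (X - C y')).degree := by rw [hGdef]; exact degree_sub_le _ _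
      _ < ((k : ℕ) : WithBot ℕ) := max_lt h1 h2
  have hG0 : G = 0 := by
    by_cases hG : G = 0
    · exact hG
    · refine eq_zero_of_natDegree_lt_card_of_eval_eq_zero' G Fp hGeval ?_
      rw [hFpc]
      exact (natDegree_lt_iff_degree_lt hG).2 hdegG
  have hzy : ∀ y ∈ Fp, z - y ≠ 0 := fun y hy => sub_ne_zero.2 (hne y hy z hz).symm
  have hkey : ∑ y ∈ Fp, (eval y Q / eval y (derivative p)) * (z - y)⁻¹ = (k : ℝ) := by
    have hEz : eval z G = 0 := by rw [hG0, eval_zero]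
    have h1 : eval z G = eval z Q - eval z p -
        ∑ y ∈ Fp, (eval y Q / eval y (derivative p)) * ∏ y' ∈ Fp.erase y, (z - y') := by
      rw [hGdef]
      simp only [eval_sub, eval_finset_sum, eval_mul, eval_C, eval_prod, eval_X]
    have h2 : ∀ y ∈ Fp, (eval y Q / eval y (derivative p)) * ∏ y' ∈ Fp.erase y, (z - y')
        = (eval y Q / eval y (derivative p)) * (z - y)⁻¹ * eval z p := by
      intro y hy
      have h3 : eval z p = (z - y) * ∏ y' ∈ Fp.erase y, (z - y') := by
        rw [hevalp z, Finset.mul_prod_erase Fp (fun w => z - w) hy]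
      rw [h3, mul_assoc, inv_mul_cancel_left₀ (hzy y hy)]
    rw [Finset.sum_congr rfl h2] at h1
    have h5 : eval z Q - eval z p = (k : ℝ) * eval z p := by rw [hQz]; ring
    rw [h5] at h1
    have h6 : ∑ y ∈ Fp, (eval y Q / eval y (derivative p)) * (z - y)⁻¹ * eval z p
        = (∑ y ∈ Fp, (eval y Q / eval y (derivative p)) * (z - y)⁻¹) * eval z p := by
      rw [Finset.sum_mul]
    rw [h6] at h1
    have hpzne := hpz z hz
    have h7 : (k : ℝ) * eval z p =
        (∑ y ∈ Fp, (eval y Q / eval y (derivative p)) * (z - y)⁻¹) * eval z p := by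
      linarith [hEz, h1]
    exact (mul_right_cancel₀ hpzne h7.symm)
  have hterm : ∀ y ∈ Fp, ((y - z) ^ 2)⁻¹ / ∑ z' ∈ Fq, ((y - z') ^ 2)⁻¹
      = ((k : ℝ) + 1)⁻¹ * ((eval y Q / eval y (derivative p)) * (z - y)⁻¹) := by
    intro y hy
    rw [hS y hy]
    have h8 : eval y q = (y - z) * eval y Q := (hQq y).symm
    have hQyne : eval y Q ≠ 0 := fun h => hqy y hy (by rw [h8, h, mul_zero])
    have hyz : y - z ≠ 0 := sub_ne_zero.2 (hne y hy z hz)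
    have hzy' := hzy y hy
    have hDy := hD y hy
    have hk1 : ((k : ℝ) + 1) ≠ 0 := by positivity
    rw [h8]
    have hzy_eq : z - y = -(y - z) := by ring
    rw [hzy_eq]
    field_simp
  rw [Finset.sum_congr rfl hterm, ← Finset.mul_sum, hkey, inv_mul_eq_div]

theorem stmt10 (N : ℕ) (hN : 1 ≤ N) (P : Polynomial ℝ) (hmonic : P.Monic)
    (hdeg : P.natDegree = N) (hcard : P.roots.card = N) (hnodup : P.roots.Nodup)
    (Pk : ℕ → Polynomial ℝ)
    (hPk : ∀ k, Pk k =
      Polynomial.C ((k.factorial : ℝ) / (N.factorial : ℝ)) * (Polynomial.derivative^[N - k] P))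
    -- `x k a` is the `a`-th smallest root of `P_k` (1-indexed, junk value otherwise)
    (x : ℕ → ℕ → ℝ)
    (hx : ∀ k a, x k a = ((Pk k).roots.sort (· ≤ ·)).getD (a - 1) 0)
    -- the stochastic matrices α^k
    (α : ℕ → ℕ → ℕ → ℝ)
    (hα : ∀ k, 1 ≤ k → k ≤ N - 1 → ∀ a, 1 ≤ a → a ≤ k → ∀ b, 1 ≤ b → b ≤ k + 1 →
      α k a b = ((x k a - x (k + 1) b) ^ 2)⁻¹ /
        ∑ b' ∈ Finset.Icc 1 (k + 1), ((x k a - x (k + 1) b') ^ 2)⁻¹)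
    -- the diffusion kernels K^{k,ℓ}
    (K : ℕ → ℕ → ℕ → ℕ → ℝ)
    (hKdiag : ∀ k a b, K k k a b = if a = b then 1 else 0)
    (hKrec : ∀ k ℓ, k ≤ ℓ → ℓ + 1 ≤ N → ∀ a b,
      K k (ℓ + 1) a b = ∑ c ∈ Finset.Icc 1 ℓ, K k ℓ a c * α ℓ c b) :
    ∀ k ℓ, 1 ≤ k → k ≤ ℓ → ℓ ≤ N → ∀ a, 1 ≤ a → a ≤ k → ∀ b, 1 ≤ b → b ≤ ℓ →
      0 ≤ K k ℓ a b ∧ K k ℓ a b ≤ (k : ℝ) / (ℓ : ℝ) := by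
  have hfacN : (N.factorial : ℝ) ≠ 0 := Nat.cast_ne_zero.2 (Nat.factorial_ne_zero N)
  have hPkN : Pk N = P := by
    rw [hPk N, Nat.sub_self, Function.iterate_zero_apply, div_self hfacN, map_one, one_mul]
  have hder : ∀ k : ℕ, k + 1 ≤ N → derivative (Pk (k + 1)) = C ((k : ℝ) + 1) * Pk k := by
    intro k hkN
    rw [hPk (k + 1), hPk k, derivative_C_mul,
      ← Function.iterate_succ_apply' derivative (N - (k + 1)) P]
    have h1 : N - k = (N - (k + 1)) + 1 := by omega
    rw [h1, ← mul_assoc, ← C_mul]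
    congr 1
    rw [Nat.factorial_succ]
    push_cast
    ring
  have chain : ∀ d k, 1 ≤ k → k + d = N →
      (Pk k).Monic ∧ (Pk k).natDegree = k ∧ Multiset.card (Pk k).roots = k ∧
        (Pk k).roots.Nodup := by
    intro d
    induction d with
    | zero =>
      intro k hk hkN
      have hkN' : k = N := by omega
      subst hkN'
      rw [hPkN]
      exact ⟨hmonic, hdeg, hcard, hnodup⟩
    | succ d ih =>
      intro k hk hkN
      obtain ⟨hm, hd, hc, hn⟩ := ih (k + 1) (by omega) (by omega)
      have hder1 := hder k (by omega)
      have hr := rolle_step k (Pk (k + 1)) (by rw [hd]) (by rw [hc]) hn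
      have hCne : ((k : ℝ) + 1) ≠ 0 := by positivity
      have hroots : (derivative (Pk (k + 1))).roots = (Pk k).roots := by
        rw [hder1, roots_C_mul _ hCne]
      have hcard' : Multiset.card (Pk k).roots = k := by rw [← hroots]; exact hr.1
      have hnodup' : (Pk k).roots.Nodup := by rw [← hroots]; exact hr.2.1
      have hdeg' : (Pk k).natDegree = k := by
        have h2 := natDegree_derivative_le (Pk (k + 1))
        rw [hder1, natDegree_C_mul hCne, hd] at h2
        have h3 := (Pk k).card_roots'
        omega
      refine ⟨?_, hdeg', hcard', hnodup'⟩
      have hc1 : (derivative (Pk (k + 1))).coeff k = ((Pk (k + 1)).coeff (k + 1)) * ((k : ℝ) + 1) := by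
        rw [coeff_derivative]
      have hc2 : (Pk (k + 1)).coeff (k + 1) = 1 := by
        have := hm.coeff_natDegree
        rwa [hd] at this
      rw [hc2, one_mul, hder1, coeff_C_mul] at hc1
      have hcoeff : (Pk k).coeff k = 1 :=
        mul_left_cancel₀ hCne (by rw [hc1, mul_one])
      exact monic_of_natDegree_le_of_coeff_eq_one k (le_of_eq hdeg') hcoeff
  have props : ∀ k, 1 ≤ k → k ≤ N →
      (Pk k).Monic ∧ (Pk k).natDegree = k ∧ Multiset.card (Pk k).roots = k ∧
        (Pk k).roots.Nodup := fun k h1 h2 => chain (N - k) k h1 (by omega)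
  have disj : ∀ k, 1 ≤ k → k + 1 ≤ N →
      Disjoint (Pk k).roots.toFinset (Pk (k + 1)).roots.toFinset := by
    intro k h1 h2
    obtain ⟨hm, hd, hc, hn⟩ := props (k + 1) (by omega) h2
    have hr := rolle_step k (Pk (k + 1)) (by rw [hd]) (by rw [hc]) hn
    have hCne : ((k : ℝ) + 1) ≠ 0 := by positivity
    have hroots : (derivative (Pk (k + 1))).roots = (Pk k).roots := by
      rw [hder k h2, roots_C_mul _ hCne]
    have h3 := hr.2.2
    rwa [hroots] at h3
  have hsum : ∀ k, 1 ≤ k → k ≤ N → ∀ f : ℝ → ℝ,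
      ∑ a ∈ Finset.Icc 1 k, f (x k a) = ∑ y ∈ (Pk k).roots.toFinset, f y := by
    intro k h1 h2 f
    obtain ⟨hm, hd, hc, hn⟩ := props k h1 h2
    have h := sum_Icc_sorted (Pk k).roots hn f
    rw [hc] at h
    rw [← h]
    exact Finset.sum_congr rfl fun a ha => by rw [hx k a]
  have hmem : ∀ k, 1 ≤ k → k ≤ N → ∀ a, 1 ≤ a → a ≤ k → x k a ∈ (Pk k).roots.toFinset := by
    intro k h1 h2 a ha1 ha2
    obtain ⟨hm, hd, hc, hn⟩ := props k h1 h2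
    rw [hx, Multiset.mem_toFinset]
    exact mem_of_getD _ ha1 (by rw [hc]; omega)
  have hkey : ∀ k, 1 ≤ k → k + 1 ≤ N →
      (∀ y ∈ (Pk k).roots.toFinset, 0 < ∑ z ∈ (Pk (k + 1)).roots.toFinset, ((y - z) ^ 2)⁻¹) ∧
        ∀ z ∈ (Pk (k + 1)).roots.toFinset, ∑ y ∈ (Pk k).roots.toFinset,
          (((y - z) ^ 2)⁻¹ / ∑ z' ∈ (Pk (k + 1)).roots.toFinset, ((y - z') ^ 2)⁻¹) =
            (k : ℝ) / ((k : ℝ) + 1) := by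
    intro k h1 h2
    obtain ⟨hm, hd, hc, hn⟩ := props k h1 (by omega)
    obtain ⟨hm', hd', hc', hn'⟩ := props (k + 1) (by omega) h2
    exact key_lemma k h1 (Pk k) (Pk (k + 1)) hm hm' hd hd' hc hc' hn hn' (hder k h2)
      (disj k h1 h2)
  have hden : ∀ k, 1 ≤ k → k + 1 ≤ N → ∀ a,
      ∑ b' ∈ Finset.Icc 1 (k + 1), ((x k a - x (k + 1) b') ^ 2)⁻¹
        = ∑ z ∈ (Pk (k + 1)).roots.toFinset, ((x k a - z) ^ 2)⁻¹ := by
    intro k h1 h2 a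
    exact hsum (k + 1) (by omega) h2 (fun t => ((x k a - t) ^ 2)⁻¹)
  have hαnn : ∀ k, 1 ≤ k → k + 1 ≤ N → ∀ a, 1 ≤ a → a ≤ k → ∀ b, 1 ≤ b → b ≤ k + 1 →
      0 ≤ α k a b := by
    intro k h1 h2 a ha1 ha2 b hb1 hb2
    rw [hα k h1 (by omega) a ha1 ha2 b hb1 hb2]
    apply div_nonneg (inv_nonneg.2 (sq_nonneg _))
    rw [hden k h1 h2 a]
    exact le_of_lt ((hkey k h1 h2).1 (x k a) (hmem k h1 (by omega) a ha1 ha2))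
  have hαcol : ∀ k, 1 ≤ k → k + 1 ≤ N → ∀ b, 1 ≤ b → b ≤ k + 1 →
      ∑ a ∈ Finset.Icc 1 k, α k a b = (k : ℝ) / ((k : ℝ) + 1) := by
    intro k h1 h2 b hb1 hb2
    have hstep : ∀ a ∈ Finset.Icc 1 k, α k a b =
        (fun y => ((y - x (k + 1) b) ^ 2)⁻¹ /
          ∑ z' ∈ (Pk (k + 1)).roots.toFinset, ((y - z') ^ 2)⁻¹) (x k a) := by
      intro a ha
      rw [Finset.mem_Icc] at ha
      rw [hα k h1 (by omega) a ha.1 ha.2 b hb1 hb2, hden k h1 h2 a]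
    have h9 := hsum k h1 (by omega) (fun y => ((y - x (k + 1) b) ^ 2)⁻¹ /
      ∑ z' ∈ (Pk (k + 1)).roots.toFinset, ((y - z') ^ 2)⁻¹)
    rw [Finset.sum_congr rfl hstep, h9]
    exact (hkey k h1 h2).2 (x (k + 1) b) (hmem (k + 1) (by omega) h2 b hb1 hb2)
  intro k ℓ hk hkl
  induction ℓ, hkl using Nat.le_induction with
  | base =>
    intro hlN a ha1 ha2 b hb1 hb2
    rw [hKdiag]
    have hkR : (k : ℝ) ≠ 0 := Nat.cast_ne_zero.2 (by omega)
    constructor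
    · split <;> norm_num
    · rw [div_self hkR]
      split <;> norm_num
  | succ ℓ hkℓ ih =>
    intro hlN a ha1 ha2 b hb1 hb2
    have hℓN : ℓ ≤ N := by omega
    have hℓ1 : 1 ≤ ℓ := le_trans hk hkℓ
    rw [hKrec k ℓ hkℓ hlN a b]
    have hterm_nn : ∀ c ∈ Finset.Icc 1 ℓ, 0 ≤ K k ℓ a c * α ℓ c b := by
      intro c hc
      rw [Finset.mem_Icc] at hc
      exact mul_nonneg ((ih hℓN a ha1 ha2 c hc.1 hc.2).1)
        (hαnn ℓ hℓ1 hlN c hc.1 hc.2 b hb1 hb2)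
    constructor
    · exact Finset.sum_nonneg hterm_nn
    · have hbound : ∀ c ∈ Finset.Icc 1 ℓ, K k ℓ a c * α ℓ c b ≤ ((k : ℝ) / (ℓ : ℝ)) * α ℓ c b := by
        intro c hc
        rw [Finset.mem_Icc] at hc
        exact mul_le_mul_of_nonneg_right ((ih hℓN a ha1 ha2 c hc.1 hc.2).2)
          (hαnn ℓ hℓ1 hlN c hc.1 hc.2 b hb1 hb2)
      have hℓR : (ℓ : ℝ) ≠ 0 := Nat.cast_ne_zero.2 (by omega)
      have hℓR1 : (ℓ : ℝ) + 1 ≠ 0 := by positivity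
      calc ∑ c ∈ Finset.Icc 1 ℓ, K k ℓ a c * α ℓ c b
          ≤ ∑ c ∈ Finset.Icc 1 ℓ, ((k : ℝ) / (ℓ : ℝ)) * α ℓ c b := Finset.sum_le_sum hbound
        _ = ((k : ℝ) / (ℓ : ℝ)) * ∑ c ∈ Finset.Icc 1 ℓ, α ℓ c b := by rw [← Finset.mul_sum]
        _ = ((k : ℝ) / (ℓ : ℝ)) * ((ℓ : ℝ) / ((ℓ : ℝ) + 1)) := by
            rw [hαcol ℓ hℓ1 hlN b hb1 hb2]
        _ = (k : ℝ) / ((ℓ + 1 : ℕ) : ℝ) := by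
            push_cast
            field_simp
end

section
/- Let k ≥ 1 and let P be a monic real polynomial of degree k + 1 with k + 1 pairwise distinct real roots x_1, …, x_{k+1}; then P' has k pairwise distinct real roots. One has Σ_{y ∈ roots(P')} ( −2·P(y)/P''(y) ) = (2/(k+1)) · [ (1/(k+1))·Σ_{i=1}^{k+1} x_i² − ( (1/(k+1))·Σ_{i=1}^{k+1} x_i )² ]. -/
open Polynomial

lemma myEsymmOne (s : Multiset ℝ) : s.esymm 1 = s.sum := by
  simp [Multiset.esymm, Multiset.powersetCard_one, Multiset.map_map, Function.comp]

lemma myEsymmConsTwo (a : ℝ) (s : Multiset ℝ) :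
    (a ::ₘ s).esymm 2 = a * s.sum + s.esymm 2 := by
  rw [Multiset.esymm, Multiset.powersetCard_cons, Multiset.map_add, Multiset.sum_add,
    Multiset.map_map, add_comm]
  congr 1
  rw [Multiset.powersetCard_one, Multiset.map_map]
  simp only [Function.comp_def, Multiset.prod_cons, Multiset.prod_singleton]
  rw [show (fun x => a * x) = (fun x => a * id x) from rfl, Multiset.sum_map_mul_left,
    Multiset.map_id]

lemma mySumSq (s : Multiset ℝ) :
    (s.map (fun x => x ^ 2)).sum = s.sum ^ 2 - 2 * s.esymm 2 := by
  induction s using Multiset.induction with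
  | empty => simp [Multiset.esymm, Multiset.powersetCard_zero_right]
  | cons a s ih =>
    rw [Multiset.map_cons, Multiset.sum_cons, ih, myEsymmConsTwo, Multiset.sum_cons]; ring

theorem stmt11 (k : ℕ) (hk : 1 ≤ k) (P : Polynomial ℝ) (hmonic : P.Monic)
    (hdeg : P.natDegree = k + 1) (hcard : P.roots.card = k + 1) (hnodup : P.roots.Nodup) :
    ((Polynomial.derivative P).roots.card = k ∧ (Polynomial.derivative P).roots.Nodup) ∧
    ((Polynomial.derivative P).roots.map (fun y =>
        -2 * P.eval y / (Polynomial.derivative (Polynomial.derivative P)).eval y)).sum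
      = 2 / ((k : ℝ) + 1) *
        ((1 / ((k : ℝ) + 1)) * (P.roots.map (fun x => x ^ 2)).sum
          - ((1 / ((k : ℝ) + 1)) * P.roots.sum) ^ 2) := by
  obtain ⟨m, rfl⟩ : ∃ m, k = m + 1 := ⟨k - 1, (Nat.succ_pred_eq_of_pos hk).symm⟩
  set d := derivative P with hd
  have hPcoeff_top : P.coeff (m + 2) = 1 := by
    have := hmonic.coeff_natDegree; rwa [hdeg] at this
  have hn2 : ((m : ℝ) + 2) ≠ 0 := by positivity
  have hdcoeff : d.coeff (m + 1) = (m : ℝ) + 2 := by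
    rw [hd, coeff_derivative, show m + 1 + 1 = m + 2 from rfl, hPcoeff_top]
    push_cast; ring
  have hd0 : d ≠ 0 := fun h => hn2 (by rw [← hdcoeff, h, coeff_zero])
  have hdnat : d.natDegree = m + 1 := by
    refine le_antisymm ?_ (le_natDegree_of_ne_zero (by rw [hdcoeff]; exact hn2))
    have := natDegree_derivative_le P
    rw [hdeg] at this; exact this.trans (by omega)
  have hcard_le : Multiset.card d.roots ≤ m + 1 := by
    have := card_roots' d; rwa [hdnat] at this
  have h1 : m + 1 ≤ d.roots.toFinset.card := by
    have h2 := P.card_roots_toFinset_le_derivative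
    rw [Multiset.toFinset_card_eq_card_iff_nodup.mpr hnodup, hcard, ← hd] at h2; omega
  have htf_le : d.roots.toFinset.card ≤ Multiset.card d.roots := Multiset.toFinset_card_le _
  have hdcard : Multiset.card d.roots = m + 1 := le_antisymm hcard_le (le_trans h1 htf_le)
  have hdnodup : d.roots.Nodup :=
    Multiset.toFinset_card_eq_card_iff_nodup.mp (le_antisymm htf_le (hdcard ▸ h1))
  refine ⟨⟨hdcard, hdnodup⟩, ?_⟩
  -- Vieta for P
  have hPfac : (P.roots.map (fun a => X - C a)).prod = P :=
    prod_multiset_X_sub_C_of_monic_of_roots_card_eq hmonic (by rw [hcard, hdeg])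
  have hb : P.coeff (m + 1) = -P.roots.sum := by
    have h := Multiset.prod_X_sub_C_coeff P.roots (k := m + 1) (by rw [hcard]; omega)
    rw [hPfac, hcard, show m + 1 + 1 - (m + 1) = 1 from by omega, myEsymmOne] at h
    rw [h]; ring
  have hc2 : P.coeff m = P.roots.esymm 2 := by
    have h := Multiset.prod_X_sub_C_coeff P.roots (k := m) (by rw [hcard]; omega)
    rw [hPfac, hcard, show m + 1 + 1 - m = 2 from by omega] at h
    rw [h]; ring
  -- factorization of d
  have hdfac : Polynomial.C ((m : ℝ) + 2) * (d.roots.map (fun a => X - C a)).prod = d := by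
    have hl : d.leadingCoeff = (m : ℝ) + 2 := by rw [leadingCoeff, hdnat, hdcoeff]
    rw [← hl]; exact C_leadingCoeff_mul_prod_multiset_X_sub_C (by rw [hdcard, hdnat])
  -- second derivative at roots of d
  have hdd : ∀ y ∈ d.roots, (derivative d).eval y
      = ((m : ℝ) + 2) * ((d.roots.erase y).map (fun z => y - z)).prod := by
    intro y hy
    conv_lhs => rw [← hdfac]
    rw [derivative_C_mul, eval_mul, eval_C, eval_multiset_prod_X_sub_C_derivative hy]
  have hne : ∀ y ∈ d.roots, (derivative d).eval y ≠ 0 := by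
    intro y hy
    rw [hdd y hy]
    refine mul_ne_zero hn2 (Multiset.prod_ne_zero ?_)
    intro h0
    obtain ⟨z, hz, hz0⟩ := Multiset.mem_map.mp h0
    obtain rfl : y = z := sub_eq_zero.mp hz0
    exact hdnodup.notMem_erase hz
  -- Finset of roots of d
  set F := d.roots.toFinset with hF
  have hFval : F.val = d.roots := Multiset.dedup_eq_self.mpr hdnodup
  have hFc : F.card = m + 1 := by
    rw [Finset.card, hFval, hdcard]
  set c : ℝ → ℝ := fun y => P.eval y / (derivative d).eval y with hc
  set R : Polynomial ℝ := P - (Polynomial.C (1 / ((m : ℝ) + 2)) * X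
      + Polynomial.C (P.coeff (m + 1) / ((m : ℝ) + 2) ^ 2)) * d with hR
  set L : Polynomial ℝ := ∑ y ∈ F, Polynomial.C (((m : ℝ) + 2) * c y)
      * ∏ z ∈ F.erase y, (X - Polynomial.C z) with hL
  have hPc : ∀ j, m + 3 ≤ j → P.coeff j = 0 := by
    intro j hj; exact coeff_eq_zero_of_natDegree_lt (by omega)
  have hRcoeff : ∀ j, m + 1 ≤ j → R.coeff j = 0 := by
    intro j hj
    obtain ⟨j', rfl⟩ : ∃ j', j = j' + 1 := ⟨j - 1, by omega⟩
    have hexp : (Polynomial.C (1 / ((m : ℝ) + 2)) * X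
        + Polynomial.C (P.coeff (m + 1) / ((m : ℝ) + 2) ^ 2)) * d
        = Polynomial.C (1 / ((m : ℝ) + 2)) * (X * d)
        + Polynomial.C (P.coeff (m + 1) / ((m : ℝ) + 2) ^ 2) * d := by ring
    rw [hR, coeff_sub, hexp, coeff_add, coeff_C_mul, coeff_C_mul, coeff_X_mul,
      coeff_derivative, coeff_derivative]
    by_cases h1 : j' = m
    · rw [h1, show m + 1 + 1 = m + 2 from rfl, hPcoeff_top]
      push_cast; field_simp; ring
    · by_cases h2 : j' = m + 1
      · rw [h2, show m + 1 + 1 + 1 = m + 3 from rfl, show m + 1 + 1 = m + 2 from rfl,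
          hPcoeff_top, hPc (m + 3) le_rfl]
        push_cast; field_simp; ring
      · rw [hPc (j' + 1) (by omega), hPc (j' + 1 + 1) (by omega)]
        ring
  have hexp : (Polynomial.C (1 / ((m : ℝ) + 2)) * X
      + Polynomial.C (P.coeff (m + 1) / ((m : ℝ) + 2) ^ 2)) * d
      = Polynomial.C (1 / ((m : ℝ) + 2)) * (X * d)
      + Polynomial.C (P.coeff (m + 1) / ((m : ℝ) + 2) ^ 2) * d := by ring
  have hdegR : R.degree < (F.card : WithBot ℕ) := by
    rw [hFc]
    exact (degree_lt_iff_coeff_zero _ _).mpr hRcoeff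
  have hdegL : L.degree < (F.card : WithBot ℕ) := by
    rw [hL, hFc]
    apply lt_of_le_of_lt (degree_sum_le _ _)
    rw [Finset.sup_lt_iff (by exact_mod_cast WithBot.bot_lt_coe (m+1))]
    intro y hy
    apply lt_of_le_of_lt (degree_le_natDegree)
    have hnat : (Polynomial.C (((m : ℝ) + 2) * c y)
        * ∏ z ∈ F.erase y, (X - Polynomial.C z)).natDegree ≤ m := by
      refine le_trans (natDegree_mul_le) ?_
      rw [natDegree_C, zero_add]
      refine le_trans (natDegree_prod_le _ _) ?_
      simp [natDegree_X_sub_C, Finset.card_erase_of_mem hy, hFc]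
    exact_mod_cast Nat.lt_succ_of_le hnat
  have heval : ∀ x ∈ F, R.eval x = L.eval x := by
    intro x hx
    have hxmem : x ∈ d.roots := Multiset.mem_toFinset.mp hx
    have hxroot : d.eval x = 0 := (mem_roots hd0).mp hxmem
    rw [hR, hL, eval_sub, eval_mul, hxroot, mul_zero, sub_zero, eval_finset_sum]
    rw [Finset.sum_eq_single x (fun y hy hyx => by
      rw [eval_mul, eval_prod]
      have : eval x (X - Polynomial.C x) = 0 := by simp
      rw [Finset.prod_eq_zero (Finset.mem_erase.mpr ⟨hyx.symm, hx⟩) this, mul_zero])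
      (fun h => (h hx).elim)]
    rw [eval_mul, eval_C, eval_prod]
    have hprodeq : (∏ z ∈ F.erase x, eval x (X - Polynomial.C z))
        = ((d.roots.erase x).map (fun z => x - z)).prod := by
      simp only [eval_sub, eval_X, eval_C]
      rw [Finset.prod_eq_multiset_prod]
      congr 1
      rw [Finset.erase_val, hFval]
    rw [hprodeq]
    have h2 := hdd x hxmem
    have h3 := hne x hxmem
    rw [hc]
    simp only
    rw [mul_comm (((m:ℝ)+2)) _, mul_assoc, ← h2, div_mul_cancel₀ _ h3]
  have hRL : R = L := eq_of_degrees_lt_of_eval_finset_eq F hdegR hdegL heval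
  have hLm : L.coeff m = ((m:ℝ)+2) * ∑ y ∈ F, c y := by
    rw [hL, finset_sum_coeff, Finset.mul_sum]
    refine Finset.sum_congr rfl fun y hy => ?_
    have hmon : (∏ z ∈ F.erase y, (X - Polynomial.C z)).Monic :=
      monic_prod_of_monic _ _ fun z _ => monic_X_sub_C z
    have hnd : (∏ z ∈ F.erase y, (X - Polynomial.C z)).natDegree = m := by
      rw [natDegree_prod_of_monic _ _ fun z _ => monic_X_sub_C z]
      simp [natDegree_X_sub_C, Finset.card_erase_of_mem hy, hFc]
    rw [coeff_C_mul, ← hnd, hmon.coeff_natDegree, mul_one]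
  have hxdm : (X * d).coeff m = (m : ℝ) * P.coeff m := by
    cases m with
    | zero => simp [mul_coeff_zero]
    | succ m' =>
      rw [coeff_X_mul, hd, coeff_derivative]
      push_cast; ring
  have hRm : R.coeff m = P.coeff m - ((1/((m:ℝ)+2)) * ((m:ℝ) * P.coeff m)
      + (P.coeff (m+1)/((m:ℝ)+2)^2) * (((m:ℝ)+1) * P.coeff (m+1))) := by
    rw [hR, coeff_sub, hexp, coeff_add, coeff_C_mul, coeff_C_mul, hxdm, hd, coeff_derivative]
    push_cast; ring
  have hkey : ((m:ℝ)+2) * ∑ y ∈ F, c y = P.coeff m - ((1/((m:ℝ)+2)) * ((m:ℝ) * P.coeff m)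
      + (P.coeff (m+1)/((m:ℝ)+2)^2) * (((m:ℝ)+1) * P.coeff (m+1))) := by
    rw [← hLm, ← hRL, hRm]
  have hLHS : (d.roots.map (fun y => -2 * P.eval y / (derivative d).eval y)).sum
      = -2 * ∑ y ∈ F, c y := by
    conv_lhs => rw [show d.roots = F.val from hFval.symm]
    rw [← Finset.sum_eq_multiset_sum, Finset.mul_sum]
    refine Finset.sum_congr rfl fun y hy => ?_
    rw [hc]
    simp only
    rw [mul_div_assoc]
  have hcast : ((m : ℝ) + 1) + 1 = (m:ℝ) + 2 := by ring
  rw [hd] at hLHS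
  rw [hLHS, mySumSq]
  rw [hc2, hb] at hkey
  rw [show ((m+1:ℕ):ℝ)+1 = (m:ℝ)+2 by push_cast; ring]
  field_simp at hkey ⊢
  linarith
end
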